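/- arXiv:math/0409201 — 5 statements merged into one kernel-verified Lean document; each statement's English description precedes it below -/
import Mathlib

section
/- Let X_1, ..., X_m be i.i.d. uniform random variables on (0,1], with X_0 = 0, and let Z_m = X_m - max{X_j : 0 ≤ j < m, X_j < X_m}. Then for 0 ≤ t ≤ 1, P[Z_m > t] = (1-t)^m. -/
open MeasureTheory ProbabilityTheory Real Set

theorem stmt0 {Ω : Type*} [MeasureSpace Ω] [IsProbabilityMeasure (ℙ : Measure Ω)]
    (m : ℕ) (hm : 1 ≤ m)
    (X : ℕ → Ω → ℝ)
    (hX0 : ∀ ω, X 0 ω = 0)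
    (hXmeas : ∀ i, Measurable (X i))
    (hXindep : iIndepFun (fun i : ℕ => X (i + 1)) ℙ)
    (hXunif : ∀ i : ℕ, Measure.map (X (i + 1)) ℙ
      = (volume : Measure ℝ).restrict (Set.Ioc 0 1))
    (Z : ℕ → Ω → ℝ)
    (hZ : ∀ k ω, Z k ω = X k ω - sSup {y : ℝ | ∃ j < k, X j ω = y ∧ y < X k ω})
    (t : ℝ) (ht0 : 0 ≤ t) (ht1 : t ≤ 1) :
    ℙ {ω | t < Z m ω} = ENNReal.ofReal ((1 - t) ^ m) := by
  obtain ⟨n, rfl⟩ := Nat.exists_eq_add_of_le' hm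
  set μ : Measure ℝ := volume.restrict (Set.Ioc 0 1) with hμdef
  haveI hProb : IsProbabilityMeasure μ := ⟨by
    rw [hμdef, Measure.restrict_apply_univ, Real.volume_Ioc]; norm_num⟩
  -- law of preimages
  have hpre : ∀ (i : ℕ) (A : Set ℝ), MeasurableSet A → ℙ (X (i + 1) ⁻¹' A) = μ A := by
    intro i A hA
    rw [← hXunif i, Measure.map_apply (hXmeas _) hA]
  -- a.e. each X (i+1) lands in (0,1]
  have hae : ∀ᵐ ω ∂ℙ, ∀ i : ℕ, X (i + 1) ω ∈ Set.Ioc (0:ℝ) 1 := by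
    rw [ae_all_iff]
    intro i
    have h0 : ℙ (X (i + 1) ⁻¹' (Set.Ioc (0:ℝ) 1)ᶜ) = 0 := by
      rw [hpre i _ measurableSet_Ioc.compl, hμdef,
        Measure.restrict_apply measurableSet_Ioc.compl, Set.compl_inter_self, measure_empty]
    exact h0
  -- the measurable equivalence splitting off the last coordinate
  set e : (Fin (n + 1) → ℝ) ≃ᵐ ℝ × (Fin n → ℝ) :=
    MeasurableEquiv.piFinSuccAbove (fun _ : Fin (n + 1) => ℝ) (Fin.last n) with hedef
  have he : ∀ f : Fin (n + 1) → ℝ,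
      e f = (f (Fin.last n), fun j => f ((Fin.last n).succAbove j)) := fun _ => rfl
  -- target set in product form
  set T : Set (ℝ × (Fin n → ℝ)) :=
    {p | t < p.1 ∧ ∀ j : Fin n, p.2 j < p.1 - t ∨ p.1 ≤ p.2 j} with hTdef
  have hT : MeasurableSet T := by
    have : T = {p : ℝ × (Fin n → ℝ) | t < p.1} ∩
        ⋂ j : Fin n, ({p : ℝ × (Fin n → ℝ) | p.2 j < p.1 - t} ∪ {p | p.1 ≤ p.2 j}) := by
      ext p; simp [hTdef, forall_or_left]
    rw [this]
    have hsnd : ∀ j : Fin n, Measurable fun p : ℝ × (Fin n → ℝ) => p.2 j :=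
      fun j => (measurable_pi_apply j).comp measurable_snd
    exact (measurableSet_lt measurable_const measurable_fst).inter
      (MeasurableSet.iInter fun j =>
        (measurableSet_lt (hsnd j) (measurable_fst.sub measurable_const)).union
          (measurableSet_le measurable_fst (hsnd j)))
  -- the random vector
  set V : Ω → (Fin (n + 1) → ℝ) := fun ω i => X (↑i + 1) ω with hVdef
  have hVmeas : Measurable V := measurable_pi_lambda _ fun i => hXmeas _
  -- event identification (a.e.)
  have hevent : {ω | t < Z (n + 1) ω} =ᵐ[ℙ] V ⁻¹' (e ⁻¹' T) := by
    rw [Filter.eventuallyEq_set]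
    filter_upwards [hae] with ω hω
    set xm := X (n + 1) ω with hxmdef
    have hxm : xm ∈ Set.Ioc (0:ℝ) 1 := hω n
    set W : Set ℝ := {y : ℝ | ∃ j < n + 1, X j ω = y ∧ y < xm} with hWdef
    have hWfin : W.Finite := by
      apply Set.Finite.subset ((Set.finite_Iio (n + 1)).image fun j => X j ω)
      rintro y ⟨j, hj, hy, -⟩
      exact ⟨j, hj, hy⟩
    have h0W : (0:ℝ) ∈ W := ⟨0, Nat.succ_pos n, hX0 ω, hxm.1⟩
    have hright : ω ∈ V ⁻¹' (e ⁻¹' T) ↔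
        t < xm ∧ ∀ k : ℕ, k < n → (X (k + 1) ω < xm - t ∨ xm ≤ X (k + 1) ω) := by
      simp only [Set.mem_preimage, he, hTdef, Set.mem_setOf_eq, hVdef]
      constructor
      · rintro ⟨h1, h2⟩
        refine ⟨h1, fun k hk => ?_⟩
        have := h2 ⟨k, hk⟩
        simpa [Fin.succAbove_last] using this
      · rintro ⟨h1, h2⟩
        refine ⟨h1, fun j => ?_⟩
        have := h2 j j.isLt
        simpa [Fin.succAbove_last] using this
    simp only [Set.mem_setOf_eq, hZ]
    rw [hright, ← hxmdef, ← hWdef, lt_sub_comm,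
      hWfin.csSup_lt_iff ⟨0, h0W⟩]
    constructor
    · intro h
      have h0 := h 0 h0W
      refine ⟨by linarith, fun k hk => ?_⟩
      by_cases hc : X (k + 1) ω < xm
      · exact Or.inl (h _ ⟨k + 1, by omega, rfl, hc⟩)
      · exact Or.inr (le_of_not_gt hc)
    · rintro ⟨h1, h2⟩ y ⟨j, hj, rfl, hy⟩
      match j with
      | 0 => rw [hX0]; linarith
      | (k + 1) =>
        rcases h2 k (by omega) with h | h
        · exact h
        · exact absurd hy (not_lt.2 h)
  -- law of the vector is the product measure
  have hmap : Measure.map V ℙ = Measure.pi fun _ : Fin (n + 1) => μ := by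
    refine (Measure.pi_eq fun s hs => ?_).symm
    rw [Measure.map_apply hVmeas (MeasurableSet.univ_pi hs)]
    set sets : ℕ → Set ℝ := fun k => if h : k < n + 1 then s ⟨k, h⟩ else Set.univ with hsets
    have hsetsm : ∀ i, i ∈ Finset.range (n + 1) → MeasurableSet (sets i) := by
      intro i hi
      rw [Finset.mem_range] at hi
      simp only [hsets, dif_pos hi]
      exact hs _
    have hVs : V ⁻¹' (Set.pi Set.univ s) =
        ⋂ i ∈ Finset.range (n + 1), X (i + 1) ⁻¹' sets i := by
      ext ω
      simp only [Set.mem_preimage, Set.mem_pi, Set.mem_univ, forall_true_left, Set.mem_iInter,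
        Finset.mem_range, hVdef, hsets]
      constructor
      · intro h i hi
        rw [dif_pos hi]
        exact h ⟨i, hi⟩
      · intro h i
        have := h i i.isLt
        rwa [dif_pos i.isLt, Fin.eta] at this
    rw [hVs, hXindep.measure_inter_preimage_eq_mul _ hsetsm, Finset.prod_range
      (fun k => ℙ (X (k + 1) ⁻¹' sets k))]
    apply Finset.prod_congr rfl
    intro i _
    rw [hpre _ _ (by rw [hsets]; simp only [dif_pos i.isLt]; exact hs _)]
    simp [hsets, dif_pos i.isLt, Fin.is_le]
  -- compute the measure
  have hEcalc : ℙ (V ⁻¹' (e ⁻¹' T)) = ENNReal.ofReal ((1 - t) ^ (n + 1)) := by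
    have hpres := measurePreserving_piFinSuccAbove (fun _ : Fin (n + 1) => μ) (Fin.last n)
    rw [← Set.preimage_comp]
    have : ℙ ((e ∘ V) ⁻¹' T) = Measure.map V ℙ (e ⁻¹' T) := by
      rw [Measure.map_apply hVmeas (e.measurable hT), Set.preimage_comp]
    rw [this, hmap, hpres.measure_preimage hT.nullMeasurableSet]
    rw [Measure.prod_apply hT]
    have hsect : ∀ a : ℝ, (Measure.pi fun _ : Fin n => μ) (Prod.mk a ⁻¹' T) =
        (Set.Ioi t).indicator (fun a => μ (Set.Iio (a - t) ∪ Set.Ici a) ^ n) a := by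
      intro a
      by_cases ha : t < a
      · have : Prod.mk a ⁻¹' T = Set.pi Set.univ fun _ : Fin n =>
            Set.Iio (a - t) ∪ Set.Ici a := by
          ext v
          simp [hTdef, ha, Set.mem_pi]
        rw [this, Measure.pi_pi, Set.indicator_of_mem (Set.mem_Ioi.mpr ha), Finset.prod_const,
          Finset.card_univ, Fintype.card_fin]
      · have : Prod.mk a ⁻¹' T = ∅ := by
          ext v; simp [hTdef, ha]
        rw [this, measure_empty, Set.indicator_of_notMem (by simpa using ha)]
    rw [lintegral_congr hsect]
    have hval : ∀ a ∈ Set.Ioc (0:ℝ) 1,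
        (Set.Ioi t).indicator (fun a => μ (Set.Iio (a - t) ∪ Set.Ici a) ^ n) a =
        (Set.Ioi t).indicator (fun _ => ENNReal.ofReal (1 - t) ^ n) a := by
      intro a ha
      by_cases hat : t < a
      · rw [Set.indicator_of_mem (Set.mem_Ioi.mpr hat), Set.indicator_of_mem (Set.mem_Ioi.mpr hat)]
        have h1 : μ (Set.Iio (a - t)) = ENNReal.ofReal (a - t) := by
          rw [hμdef, Measure.restrict_apply measurableSet_Iio]
          have : Set.Iio (a - t) ∩ Set.Ioc 0 1 = Set.Ioo 0 (a - t) := by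
            ext x
            simp only [Set.mem_inter_iff, Set.mem_Iio, Set.mem_Ioc, Set.mem_Ioo]
            constructor
            · rintro ⟨h1, h2, h3⟩; exact ⟨h2, h1⟩
            · rintro ⟨h1, h2⟩
              obtain ⟨h3, h4⟩ := ha
              exact ⟨h2, h1, by linarith⟩
          rw [this, Real.volume_Ioo, sub_zero]
        have h2 : μ (Set.Ici a) = ENNReal.ofReal (1 - a) := by
          rw [hμdef, Measure.restrict_apply measurableSet_Ici]
          have : Set.Ici a ∩ Set.Ioc 0 1 = Set.Icc a 1 := by
            ext x
            simp only [Set.mem_inter_iff, Set.mem_Ici, Set.mem_Ioc, Set.mem_Icc]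
            obtain ⟨h3, h4⟩ := ha
            constructor
            · rintro ⟨hh1, hh2, hh3⟩; exact ⟨hh1, hh3⟩
            · rintro ⟨hh1, hh2⟩; exact ⟨hh1, by linarith, hh2⟩
          rw [this, Real.volume_Icc]
        have hdisj : Disjoint (Set.Iio (a - t)) (Set.Ici a) := by
          rw [Set.disjoint_left]
          intro x hx hx'
          simp only [Set.mem_Iio] at hx
          simp only [Set.mem_Ici] at hx'
          linarith
        rw [measure_union hdisj measurableSet_Ici, h1, h2,
          ← ENNReal.ofReal_add (by linarith [ha.2, hat] : (0:ℝ) ≤ a - t) (by linarith [ha.2])]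
        congr 2
        ring
      · rw [Set.indicator_of_notMem (by simpa using hat), Set.indicator_of_notMem (by simpa using hat)]
    calc ∫⁻ a, (Set.Ioi t).indicator (fun a => μ (Set.Iio (a - t) ∪ Set.Ici a) ^ n) a ∂μ
        = ∫⁻ a in Set.Ioc (0:ℝ) 1,
            (Set.Ioi t).indicator (fun _ => ENNReal.ofReal (1 - t) ^ n) a ∂volume := by
          rw [hμdef]
          exact setLIntegral_congr_fun measurableSet_Ioc hval
      _ = ENNReal.ofReal (1 - t) ^ n * volume (Set.Ioi t ∩ Set.Ioc 0 1) := by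
          rw [lintegral_indicator measurableSet_Ioi, Measure.restrict_restrict measurableSet_Ioi,
            setLIntegral_const]
      _ = ENNReal.ofReal ((1 - t) ^ (n + 1)) := by
          have : Set.Ioi t ∩ Set.Ioc (0:ℝ) 1 = Set.Ioc t 1 := by
            ext x
            simp only [Set.mem_inter_iff, Set.mem_Ioi, Set.mem_Ioc]
            constructor
            · rintro ⟨h1, h2, h3⟩; exact ⟨h1, h3⟩
            · rintro ⟨h1, h2⟩; exact ⟨h1, by linarith, h2⟩
          rw [this, Real.volume_Ioc, ENNReal.ofReal_pow (by linarith), pow_succ]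
  rw [measure_congr hevent, hEcalc]
end

section
/- The expected total length (α=1) of the directed linear tree on m uniform points with root 0 satisfies E[D^1(U_m^0)] = Σ_{i=1}^m 1/(i+1), and hence E[D^1(U_m^0)] - log m → γ - 1 as m → ∞, where γ is Euler's constant. -/
open MeasureTheory ProbabilityTheory Real Set Filter

private lemma fold_max_mem {α : Type*} (s : Finset α) (f : α → ℝ) (b : ℝ) :
    s.fold max b f = b ∨ ∃ j ∈ s, s.fold max b f = f j := by
  classical
  induction s using Finset.induction_on with
  | empty => left; simp
  | @insert a s' h ih =>
    rw [Finset.fold_insert h]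
    rcases max_choice (f a) (s'.fold max b f) with hc | hc
    · right; exact ⟨a, Finset.mem_insert_self _ _, hc⟩
    · rcases ih with h1 | ⟨j, hj, h2⟩
      · left; rw [hc, h1]
      · right; exact ⟨j, Finset.mem_insert_of_mem hj, hc.trans h2⟩

private lemma measurable_fold_max {Ω α : Type*} [MeasurableSpace Ω] (s : Finset α)
    (g : α → Ω → ℝ) (hg : ∀ j, Measurable (g j)) :
    Measurable (fun ω => s.fold max (0:ℝ) (fun j => g j ω)) := by
  classical
  induction s using Finset.induction_on with
  | empty => simp only [Finset.fold_empty]; exact measurable_const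
  | @insert a s' h ih =>
    simp only [Finset.fold_insert h]
    exact (hg a).max ih

set_option maxHeartbeats 1000000 in
private lemma prob_event {Ω : Type*} [MeasureSpace Ω] [IsProbabilityMeasure (ℙ : Measure Ω)]
    (X : ℕ → Ω → ℝ)
    (hXmeas : ∀ i, Measurable (X i))
    (hXindep : iIndepFun (fun i : ℕ => X (i + 1)) ℙ)
    (hXunif : ∀ i : ℕ, Measure.map (X (i + 1)) ℙ
      = (volume : Measure ℝ).restrict (Set.Ioc 0 1))
    (m : ℕ) (t : ℝ) (ht0 : 0 < t) (ht1 : t ≤ 1) :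
    ℙ {ω | (Finset.range m).fold max 0
        (fun j => if X (j+1) ω < X (m+1) ω then X (j+1) ω else 0) < t ∧ t ≤ X (m+1) ω}
      = ENNReal.ofReal ((1 - t^(m+1))/((m:ℝ)+1)) := by
  classical
  set ν : Measure ℝ := volume.restrict (Set.Ioc 0 1) with hν
  set xk : Ω → ℝ := X (m+1) with hxk
  have hxkmeas : Measurable xk := hXmeas _
  set W : Ω → (Fin m → ℝ) := fun ω j => X (j+1) ω with hW
  have hWmeas : Measurable W := measurable_pi_lambda _ (fun j => hXmeas _)
  set κ : Measure (Fin m → ℝ) := Measure.map W ℙ with hκ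
  -- independence of xk and W
  have hind : IndepFun xk W ℙ := by
    have h1 := hXindep.indepFun_finset {m} (Finset.range m)
      (by simp [Finset.disjoint_left]) (fun i => hXmeas _)
    have hφ : Measurable (fun v : (∀ _ : ({m} : Finset ℕ), ℝ) =>
        v ⟨m, Finset.mem_singleton_self m⟩) := measurable_pi_apply _
    have hψ : Measurable (fun (v : ∀ _ : (Finset.range m : Finset ℕ), ℝ) (j : Fin m) =>
        v ⟨(j : ℕ), Finset.mem_range.mpr j.2⟩) :=
      measurable_pi_lambda _ (fun j => measurable_pi_apply _)
    exact h1.comp hφ hψ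
  have hmap : Measure.map (fun ω => (xk ω, W ω)) ℙ = ν.prod κ := by
    rw [← hXunif m, hκ]
    exact (indepFun_iff_map_prod_eq_prod_map_map hxkmeas.aemeasurable
      hWmeas.aemeasurable).mp hind
  set C : Set (ℝ × (Fin m → ℝ)) :=
    {p | t ≤ p.1 ∧ ∀ j, p.2 j < t ∨ p.1 ≤ p.2 j} with hC
  have hCmeas : MeasurableSet C := by
    have : C = {p : ℝ × (Fin m → ℝ) | t ≤ p.1} ∩
        ⋂ j : Fin m, ({p : ℝ × (Fin m → ℝ) | p.2 j < t} ∪ {p | p.1 ≤ p.2 j}) := by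
      apply Set.ext; intro p
      rw [hC]
      simp [Set.mem_iInter]
    rw [this]
    refine (measurableSet_le measurable_const measurable_fst).inter
      (MeasurableSet.iInter fun j => ?_)
    exact (measurableSet_lt ((measurable_pi_apply j).comp measurable_snd)
      measurable_const).union
      (measurableSet_le measurable_fst ((measurable_pi_apply j).comp measurable_snd))
  have hev : {ω | (Finset.range m).fold max 0
      (fun j => if X (j+1) ω < X (m+1) ω then X (j+1) ω else 0) < t ∧ t ≤ X (m+1) ω}
      = (fun ω => (xk ω, W ω)) ⁻¹' C := by
    ext ω
    simp only [Set.mem_setOf_eq, Set.mem_preimage, hC]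
    rw [Finset.fold_max_lt]
    constructor
    · rintro ⟨⟨-, hall⟩, hle⟩
      refine ⟨hle, fun j => ?_⟩
      have := hall (j : ℕ) (Finset.mem_range.mpr j.2)
      by_cases hc : X ((j:ℕ)+1) ω < X (m+1) ω
      · rw [if_pos hc] at this; exact Or.inl this
      · exact Or.inr (not_lt.mp hc)
    · rintro ⟨hle, hall⟩
      refine ⟨⟨ht0, fun j hj => ?_⟩, hle⟩
      rw [Finset.mem_range] at hj
      rcases hall ⟨j, hj⟩ with h | h
      · split_ifs with hc
        · exact h
        · exact ht0
      · rw [if_neg (not_lt.mpr h)]; exact ht0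
  rw [hev, ← Measure.map_apply (hxkmeas.prodMk hWmeas) hCmeas, hmap,
    Measure.prod_apply hCmeas]
  -- slice computation
  have hslice : ∀ x : ℝ, x ∈ Set.Ioc (0:ℝ) 1 →
      κ (Prod.mk x ⁻¹' C) = Set.indicator (Set.Ici t)
        (fun x => ENNReal.ofReal ((1 - x + t)^m)) x := by
    intro x hx
    by_cases hxt : t ≤ x
    · rw [Set.indicator_of_mem (Set.mem_Ici.mpr hxt)]
      have hsl : Prod.mk x ⁻¹' C = ⋂ j : Fin m, (fun v : Fin m → ℝ => v j) ⁻¹'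
          (Set.Iio t ∪ Set.Ici x) := by
        ext v
        simp only [Set.mem_preimage, hC, Set.mem_setOf_eq, Set.mem_iInter,
          Set.mem_union, Set.mem_Iio, Set.mem_Ici]
        exact ⟨fun h j => h.2 j, fun h => ⟨hxt, h⟩⟩
      have hB : MeasurableSet (Set.Iio t ∪ Set.Ici x) :=
        measurableSet_Iio.union measurableSet_Ici
      rw [hsl, hκ, Measure.map_apply hWmeas
        (MeasurableSet.iInter fun j => (measurable_pi_apply j) hB)]
      have hpre : W ⁻¹' (⋂ j : Fin m, (fun v : Fin m → ℝ => v j) ⁻¹'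
          (Set.Iio t ∪ Set.Ici x))
          = ⋂ i ∈ Finset.range m, X (i+1) ⁻¹' (Set.Iio t ∪ Set.Ici x) := by
        ext ω
        simp only [Set.mem_preimage, Set.mem_iInter, hW, Finset.mem_range]
        exact ⟨fun h i hi => h ⟨i, hi⟩, fun h j => h (j : ℕ) j.2⟩
      rw [hpre, hXindep.measure_inter_preimage_eq_mul (Finset.range m)
        (sets := fun _ => Set.Iio t ∪ Set.Ici x) (fun i _ => hB)]
      have hone : ∀ i : ℕ, ℙ (X (i+1) ⁻¹' (Set.Iio t ∪ Set.Ici x))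
          = ENNReal.ofReal (1 - x + t) := by
        intro i
        rw [← Measure.map_apply (hXmeas _) hB, hXunif i,
          Measure.restrict_apply hB]
        have h1 : (Set.Iio t ∪ Set.Ici x) ∩ Set.Ioc 0 1
            = Set.Ioo 0 t ∪ Set.Icc x 1 := by
          ext u
          simp only [Set.mem_inter_iff, Set.mem_union, Set.mem_Iio, Set.mem_Ici,
            Set.mem_Ioc, Set.mem_Ioo, Set.mem_Icc]
          constructor
          · rintro ⟨h | h, h0, h1'⟩
            · exact Or.inl ⟨h0, h⟩
            · exact Or.inr ⟨h, h1'⟩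
          · rintro (⟨h0, h'⟩ | ⟨h0, h'⟩)
            · exact ⟨Or.inl h', h0, le_trans (le_of_lt h') (le_trans hxt hx.2)⟩
            · exact ⟨Or.inr h0, lt_of_lt_of_le ht0 (le_trans hxt h0), h'⟩
        rw [h1, measure_union ?_ measurableSet_Icc]
        · rw [Real.volume_Ioo, Real.volume_Icc, ← ENNReal.ofReal_add
            (by linarith) (by linarith [hx.2])]
          congr 1; ring
        · rw [Set.disjoint_left]
          rintro u ⟨-, hu2⟩ ⟨hu3, -⟩
          linarith
      calc ∏ i ∈ Finset.range m, ℙ (X (i+1) ⁻¹' (Set.Iio t ∪ Set.Ici x))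
          = ∏ _i ∈ Finset.range m, ENNReal.ofReal (1 - x + t) :=
            Finset.prod_congr rfl (fun i _ => hone i)
        _ = (ENNReal.ofReal (1 - x + t))^m := by
            rw [Finset.prod_const, Finset.card_range]
        _ = ENNReal.ofReal ((1 - x + t)^m) :=
            (ENNReal.ofReal_pow (by linarith [hx.2]) m).symm
    · rw [Set.indicator_of_notMem (fun h => hxt (Set.mem_Ici.mp h))]
      have : Prod.mk x ⁻¹' C = ∅ := by
        ext v
        simp only [Set.mem_preimage, hC, Set.mem_setOf_eq, Set.mem_empty_iff_false,
          iff_false]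
        rintro ⟨h, -⟩
        exact hxt h
      rw [this, measure_empty]
  -- finish: integrate the slice
  have h1 : ∫⁻ x, κ (Prod.mk x ⁻¹' C) ∂ν
      = ∫⁻ x, Set.indicator (Set.Ici t) (fun x => ENNReal.ofReal ((1 - x + t)^m)) x ∂ν := by
    refine lintegral_congr_ae ?_
    filter_upwards [ae_restrict_mem measurableSet_Ioc] with x hx using hslice x hx
  rw [h1, lintegral_indicator measurableSet_Ici]
  have h2 : ν.restrict (Set.Ici t) = volume.restrict (Set.Icc t 1) := by
    rw [hν, Measure.restrict_restrict measurableSet_Ici]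
    congr 1
    ext u
    simp only [Set.mem_inter_iff, Set.mem_Ici, Set.mem_Ioc, Set.mem_Icc]
    exact ⟨fun ⟨a, _, c⟩ => ⟨a, c⟩, fun ⟨a, b⟩ => ⟨a, lt_of_lt_of_le ht0 a, b⟩⟩
  rw [h2]
  have hInt : IntegrableOn (fun x => (1 - x + t)^m) (Set.Icc t 1) volume := by
    apply Continuous.integrableOn_Icc
    fun_prop
  have hnn : 0 ≤ᵐ[volume.restrict (Set.Icc t 1)] fun x => (1 - x + t)^m := by
    filter_upwards [ae_restrict_mem measurableSet_Icc] with x hx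
    have h0 : (0:ℝ) ≤ 1 - x + t := by
      have := hx.2; linarith
    positivity
  rw [← MeasureTheory.ofReal_integral_eq_lintegral_ofReal hInt hnn]
  congr 1
  rw [MeasureTheory.integral_Icc_eq_integral_Ioc, ← intervalIntegral.integral_of_le ht1]
  have hcv := intervalIntegral.integral_comp_sub_left (a := t) (b := 1)
    (fun u : ℝ => u^m) (1+t)
  simp only [add_sub_cancel_left, add_sub_cancel_right] at hcv
  rw [integral_pow, one_pow] at hcv
  calc ∫ x in t..1, (1 - x + t)^m
      = ∫ x in t..1, (1 + t - x)^m := by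
        apply intervalIntegral.integral_congr
        intro x _
        ring_nf
    _ = (1 - t^(m+1))/((m:ℝ)+1) := hcv

set_option maxHeartbeats 1000000 in
private lemma exp_Z {Ω : Type*} [MeasureSpace Ω] [IsProbabilityMeasure (ℙ : Measure Ω)]
    (X : ℕ → Ω → ℝ)
    (hX0 : ∀ ω, X 0 ω = 0)
    (hXmeas : ∀ i, Measurable (X i))
    (hXindep : iIndepFun (fun i : ℕ => X (i + 1)) ℙ)
    (hXunif : ∀ i : ℕ, Measure.map (X (i + 1)) ℙ
      = (volume : Measure ℝ).restrict (Set.Ioc 0 1))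
    (Z : ℕ → Ω → ℝ)
    (hZ : ∀ k ω, Z k ω = X k ω - sSup {y : ℝ | ∃ j < k, X j ω = y ∧ y < X k ω})
    (m : ℕ) :
    Integrable (Z (m+1)) ℙ ∧ ∫ ω, Z (m+1) ω ∂ℙ = 1 / ((m:ℝ) + 2) := by
  classical
  set ν : Measure ℝ := volume.restrict (Set.Ioc 0 1) with hν
  have hν1 : IsProbabilityMeasure ν := by
    constructor
    rw [hν, Measure.restrict_apply MeasurableSet.univ, Set.univ_inter, Real.volume_Ioc]
    norm_num
  set xk : Ω → ℝ := X (m+1) with hxk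
  have hxkmeas : Measurable xk := hXmeas _
  set M : Ω → ℝ := fun ω => (Finset.range m).fold max 0
    (fun j => if X (j+1) ω < xk ω then X (j+1) ω else 0) with hM
  have hMmeas : Measurable M := by
    apply measurable_fold_max
    intro j
    exact Measurable.ite (measurableSet_lt (hXmeas _) hxkmeas) (hXmeas _) measurable_const
  set f : Ω → ℝ := fun ω => xk ω - M ω with hf
  have hfmeas : Measurable f := hxkmeas.sub hMmeas
  -- a.e. goodness
  have hgood : ∀ᵐ ω ∂ℙ, ∀ j : ℕ, X (j+1) ω ∈ Set.Ioc (0:ℝ) 1 := by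
    rw [MeasureTheory.ae_all_iff]
    intro j
    have : ℙ (X (j+1) ⁻¹' (Set.Ioc (0:ℝ) 1)ᶜ) = 0 := by
      rw [← Measure.map_apply (hXmeas _) measurableSet_Ioc.compl, hXunif j,
        Measure.restrict_apply measurableSet_Ioc.compl]
      simp
    exact this
  -- pointwise facts on the good set
  have hpt : ∀ ω, (∀ j : ℕ, X (j+1) ω ∈ Set.Ioc (0:ℝ) 1) →
      Z (m+1) ω = f ω ∧ 0 ≤ M ω ∧ M ω ≤ xk ω ∧ xk ω ≤ 1 := by
    intro ω hω
    obtain ⟨hx0, hx1⟩ := hω m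
    have hM0 : 0 ≤ M ω := (Finset.le_fold_max 0).mpr (Or.inl le_rfl)
    have hMx : M ω ≤ xk ω := by
      apply (Finset.fold_max_le (xk ω)).mpr
      refine ⟨le_of_lt hx0, fun j _ => ?_⟩
      show (if X (j+1) ω < xk ω then X (j+1) ω else 0) ≤ xk ω
      split_ifs with h
      · exact le_of_lt h
      · exact le_of_lt hx0
    have hgreat : IsGreatest {y : ℝ | ∃ j < m+1, X j ω = y ∧ y < X (m+1) ω} (M ω) := by
      constructor
      · rcases fold_max_mem (Finset.range m)
          (fun j => if X (j+1) ω < xk ω then X (j+1) ω else 0) 0 with h | ⟨j, hj, h⟩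
        · show M ω ∈ _
          rw [hM]
          simp only
          rw [h]
          exact ⟨0, by omega, hX0 ω, hx0⟩
        · rw [Finset.mem_range] at hj
          show M ω ∈ _
          rw [hM]
          simp only
          rw [h]
          show (if X (j+1) ω < xk ω then X (j+1) ω else 0) ∈ _
          split_ifs with hc
          · exact ⟨j+1, by omega, rfl, hc⟩
          · exact ⟨0, by omega, hX0 ω, hx0⟩
      · rintro y ⟨j, hj, hjy, hylt⟩
        match j, hj with
        | 0, _ => rw [← hjy, hX0 ω]; exact hM0
        | (j' + 1), hj =>
          apply (Finset.le_fold_max y).mpr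
          right
          refine ⟨j', Finset.mem_range.mpr (by omega), ?_⟩
          show y ≤ (if X (j'+1) ω < xk ω then X (j'+1) ω else 0)
          rw [hjy, if_pos (show y < xk ω from hylt)]
    refine ⟨?_, hM0, hMx, hx1⟩
    rw [hZ, hgreat.csSup_eq]
  -- Z is a.e. equal to f, and bounds
  have hZf : Z (m+1) =ᵐ[ℙ] f := by
    filter_upwards [hgood] with ω h using (hpt ω h).1
  have hfbd : ∀ᵐ ω ∂ℙ, 0 ≤ f ω ∧ f ω ≤ 1 := by
    filter_upwards [hgood] with ω h
    obtain ⟨-, h0, h1, h2⟩ := hpt ω h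
    exact ⟨by simp only [hf]; linarith, by simp only [hf]; linarith⟩
  have hfint : Integrable f ℙ := by
    refine (integrable_const (1:ℝ)).mono' hfmeas.aestronglyMeasurable ?_
    filter_upwards [hfbd] with ω ⟨h0, h1⟩
    rw [Real.norm_eq_abs, abs_of_nonneg h0]; exact h1
  have hZint : Integrable (Z (m+1)) ℙ := hfint.congr hZf.symm
  refine ⟨hZint, ?_⟩
  -- the lintegral computation
  set A : Set (Ω × ℝ) := {q | M q.1 < q.2 ∧ q.2 ≤ xk q.1} with hAdef
  have hA : MeasurableSet A :=
    (measurableSet_lt (hMmeas.comp measurable_fst) measurable_snd).inter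
      (measurableSet_le measurable_snd (hxkmeas.comp measurable_fst))
  have s1 : ∫⁻ ω, ENNReal.ofReal (f ω) ∂ℙ = ∫⁻ ω, ν (Prod.mk ω ⁻¹' A) ∂ℙ := by
    refine lintegral_congr_ae ?_
    filter_upwards [hgood] with ω h
    obtain ⟨-, h0, h1, h2⟩ := hpt ω h
    have hpre : Prod.mk ω ⁻¹' A = Set.Ioc (M ω) (xk ω) := by
      ext u
      simp only [Set.mem_preimage, hAdef, Set.mem_setOf_eq, Set.mem_Ioc]
    rw [hpre, hν, Measure.restrict_apply measurableSet_Ioc]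
    have hss : Set.Ioc (M ω) (xk ω) ∩ Set.Ioc 0 1 = Set.Ioc (M ω) (xk ω) := by
      apply Set.inter_eq_left.mpr
      intro u hu
      exact ⟨lt_of_le_of_lt h0 hu.1, le_trans hu.2 h2⟩
    rw [hss, Real.volume_Ioc]
  have s2 : ∫⁻ ω, ν (Prod.mk ω ⁻¹' A) ∂ℙ = (Measure.prod ℙ ν) A := (Measure.prod_apply hA).symm
  have s3 : (Measure.prod ℙ ν) A = ∫⁻ t, ℙ ((fun ω => (ω, t)) ⁻¹' A) ∂ν :=
    Measure.prod_apply_symm hA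
  have s4 : ∫⁻ t, ℙ ((fun ω => (ω, t)) ⁻¹' A) ∂ν
      = ∫⁻ t, ENNReal.ofReal ((1 - t^(m+1))/((m:ℝ)+1)) ∂ν := by
    refine lintegral_congr_ae ?_
    filter_upwards [ae_restrict_mem measurableSet_Ioc] with t ht
    have hpre : (fun ω => (ω, t)) ⁻¹' A = {ω | M ω < t ∧ t ≤ xk ω} := rfl
    rw [hpre]
    exact prob_event X hXmeas hXindep hXunif m t ht.1 ht.2
  have s5 : ∫⁻ t, ENNReal.ofReal ((1 - t^(m+1))/((m:ℝ)+1)) ∂ν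
      = ENNReal.ofReal (1/((m:ℝ)+2)) := by
    have hInt : IntegrableOn (fun t : ℝ => (1 - t^(m+1))/((m:ℝ)+1)) (Set.Ioc 0 1) volume := by
      apply IntegrableOn.mono_set (t := Set.Icc 0 1) ?_ Set.Ioc_subset_Icc_self
      apply Continuous.integrableOn_Icc
      fun_prop
    have hnn : 0 ≤ᵐ[volume.restrict (Set.Ioc 0 1)]
        fun t : ℝ => (1 - t^(m+1))/((m:ℝ)+1) := by
      filter_upwards [ae_restrict_mem measurableSet_Ioc] with u hu
      have h1 : u^(m+1) ≤ 1 := pow_le_one₀ (le_of_lt hu.1) hu.2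
      have h2 : (0:ℝ) ≤ (m:ℝ)+1 := by positivity
      exact div_nonneg (by linarith) h2
    rw [hν, ← MeasureTheory.ofReal_integral_eq_lintegral_ofReal hInt hnn]
    congr 1
    rw [← intervalIntegral.integral_of_le zero_le_one, intervalIntegral.integral_div,
      intervalIntegral.integral_sub intervalIntegrable_const
        (intervalIntegral.intervalIntegrable_pow _),
      integral_one, integral_pow]
    rw [one_pow, zero_pow (by omega : m + 1 + 1 ≠ 0)]
    push_cast
    have hm1 : ((m:ℝ)+1) ≠ 0 := by positivity
    have hm2 : ((m:ℝ)+2) ≠ 0 := by positivity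
    field_simp
    ring
  -- conclude
  have key : ∫⁻ ω, ENNReal.ofReal (f ω) ∂ℙ = ENNReal.ofReal (1/((m:ℝ)+2)) := by
    rw [s1, s2, s3, s4, s5]
  have h1 : ENNReal.ofReal (∫ ω, f ω ∂ℙ) = ENNReal.ofReal (1 / ((m:ℝ) + 2)) := by
    rw [MeasureTheory.ofReal_integral_eq_lintegral_ofReal hfint
      (by filter_upwards [hfbd] with ω h using h.1), key]
  have h2 : ∫ ω, Z (m+1) ω ∂ℙ = ∫ ω, f ω ∂ℙ := integral_congr_ae hZf
  rw [h2]
  have hnn : 0 ≤ ∫ ω, f ω ∂ℙ :=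
    integral_nonneg_of_ae (by filter_upwards [hfbd] with ω h using h.1)
  exact (ENNReal.ofReal_eq_ofReal_iff hnn (by positivity)).mp h1

theorem stmt5 {Ω : Type*} [MeasureSpace Ω] [IsProbabilityMeasure (ℙ : Measure Ω)]
    (X : ℕ → Ω → ℝ)
    (hX0 : ∀ ω, X 0 ω = 0)
    (hXmeas : ∀ i, Measurable (X i))
    (hXindep : iIndepFun (fun i : ℕ => X (i + 1)) ℙ)
    (hXunif : ∀ i : ℕ, Measure.map (X (i + 1)) ℙ
      = (volume : Measure ℝ).restrict (Set.Ioc 0 1))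
    (Z : ℕ → Ω → ℝ)
    (hZ : ∀ k ω, Z k ω = X k ω - sSup {y : ℝ | ∃ j < k, X j ω = y ∧ y < X k ω})
    (γ : ℝ)
    (hγ : Tendsto (fun k : ℕ => (∑ i ∈ Finset.Icc 1 k, (1 : ℝ) / i) - Real.log k)
      atTop (nhds γ))
    (E : ℕ → ℝ)
    (hE : ∀ n : ℕ, E n = ∫ ω, ∑ i ∈ Finset.Icc 1 n, Z i ω ∂ℙ) :
    (∀ n : ℕ, E n = ∑ i ∈ Finset.Icc 1 n, 1 / ((i : ℝ) + 1)) ∧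
      Tendsto (fun n : ℕ => E n - Real.log n) atTop (nhds (γ - 1)) := by
  have part1 : ∀ n : ℕ, E n = ∑ i ∈ Finset.Icc 1 n, 1 / ((i : ℝ) + 1) := by
    intro n
    rw [hE n, MeasureTheory.integral_finset_sum]
    · apply Finset.sum_congr rfl
      intro i hi
      rw [Finset.mem_Icc] at hi
      obtain ⟨m, rfl⟩ : ∃ m, i = m + 1 := ⟨i - 1, by omega⟩
      rw [(exp_Z X hX0 hXmeas hXindep hXunif Z hZ m).2]
      push_cast
      ring
    · intro i hi
      rw [Finset.mem_Icc] at hi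
      obtain ⟨m, rfl⟩ : ∃ m, i = m + 1 := ⟨i - 1, by omega⟩
      exact (exp_Z X hX0 hXmeas hXindep hXunif Z hZ m).1
  refine ⟨part1, ?_⟩
  have hsum : ∀ n : ℕ, ∑ i ∈ Finset.Icc 1 n, 1 / ((i : ℝ) + 1)
      = (∑ i ∈ Finset.Icc 1 (n+1), (1 : ℝ) / i) - 1 := by
    intro n
    induction n with
    | zero => simp
    | succ k ih =>
      rw [Finset.sum_Icc_succ_top (by omega : 1 ≤ k + 1),
        Finset.sum_Icc_succ_top (by omega : 1 ≤ k + 1 + 1), ih]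
      push_cast
      ring
  have hEE : ∀ n : ℕ, E n = (∑ i ∈ Finset.Icc 1 (n+1), (1 : ℝ) / i) - 1 := by
    intro n; rw [part1 n, hsum n]
  have hcomp : Tendsto ((fun k : ℕ => (∑ i ∈ Finset.Icc 1 k, (1 : ℝ) / i) - Real.log k)
      ∘ (fun n : ℕ => n + 1)) atTop (nhds γ) :=
    hγ.comp (tendsto_add_atTop_nat 1)
  have hlog : Tendsto (fun n : ℕ => Real.log ((n:ℕ)+1 : ℕ) - Real.log (n : ℝ))
      atTop (nhds 0) := by
    have h1 : Tendsto (fun n : ℕ => 1 + 1/(n:ℝ)) atTop (nhds 1) := by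
      have := tendsto_const_nhds (x := (1:ℝ)) (f := atTop (α := ℕ))
        |>.add tendsto_one_div_atTop_nhds_zero_nat
      simpa using this
    have h2 : Tendsto (fun n : ℕ => Real.log (1 + 1/(n:ℝ))) atTop (nhds 0) := by
      have hc : ContinuousAt Real.log 1 := Real.continuousAt_log (by norm_num)
      have := hc.tendsto.comp h1
      simpa [Function.comp_def] using this
    apply h2.congr'
    filter_upwards [eventually_gt_atTop 0] with n hn
    have hn' : (0:ℝ) < n := by exact_mod_cast hn
    have : 1 + 1/(n:ℝ) = ((n:ℝ)+1)/n := by field_simp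
    rw [this, Real.log_div (by positivity) (ne_of_gt hn')]
    push_cast
    ring
  have hfin := (hcomp.add hlog).sub (tendsto_const_nhds (x := (1:ℝ)))
  have hlim : γ + 0 - 1 = γ - 1 := by ring
  rw [hlim] at hfin
  apply hfin.congr
  intro n
  rw [hEE n]
  simp only [Function.comp_apply]
  push_cast
  ring
end

section
/- For 0 < α < 1, E[D^α(U_m^0)] ~ (Γ(α+1)/(1-α)) · m^{1-α} as m → ∞. -/
open MeasureTheory ProbabilityTheory Real Set Filter
open Topology


section PW
variable {Ω : Type*} (X : ℕ → Ω → ℝ) (ω : Ω) (m : ℕ)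

lemma S_finite : {y : ℝ | ∃ j < m+1, X j ω = y ∧ y < X (m+1) ω}.Finite := by
  apply ((Set.finite_Iio (m+1)).image (fun j => X j ω)).subset
  rintro y ⟨j, hj, rfl, _⟩
  exact ⟨j, hj, rfl⟩

variable (hX0 : X 0 ω = 0) (hpos : 0 < X (m+1) ω)
include hX0 hpos

lemma S_zero_mem : (0:ℝ) ∈ {y : ℝ | ∃ j < m+1, X j ω = y ∧ y < X (m+1) ω} :=
  ⟨0, by omega, hX0, hpos⟩

lemma sSup_S_mem : sSup {y : ℝ | ∃ j < m+1, X j ω = y ∧ y < X (m+1) ω}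
    ∈ {y : ℝ | ∃ j < m+1, X j ω = y ∧ y < X (m+1) ω} :=
  Set.Nonempty.csSup_mem ⟨0, S_zero_mem X ω m hX0 hpos⟩ (S_finite X ω m)

lemma sSup_S_nonneg : 0 ≤ sSup {y : ℝ | ∃ j < m+1, X j ω = y ∧ y < X (m+1) ω} :=
  le_csSup (S_finite X ω m).bddAbove (S_zero_mem X ω m hX0 hpos)

lemma sSup_S_lt : sSup {y : ℝ | ∃ j < m+1, X j ω = y ∧ y < X (m+1) ω} < X (m+1) ω := by
  obtain ⟨j, hj, hXj, hlt⟩ := sSup_S_mem X ω m hX0 hpos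
  rw [← hXj] at hlt
  calc sSup _ = X j ω := hXj.symm
  _ < _ := hlt

lemma charZ (t : ℝ) :
    t < X (m+1) ω - sSup {y : ℝ | ∃ j < m+1, X j ω = y ∧ y < X (m+1) ω}
      ↔ (t < X (m+1) ω ∧ ∀ k < m, X (k+1) ω ∉ Ico (X (m+1) ω - t) (X (m+1) ω)) := by
  set S := {y : ℝ | ∃ j < m+1, X j ω = y ∧ y < X (m+1) ω} with hS
  constructor
  · intro h
    have hnn := sSup_S_nonneg X ω m hX0 hpos
    refine ⟨by linarith, fun k hk hmem => ?_⟩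
    have hmemS : X (k+1) ω ∈ S := ⟨k+1, by omega, rfl, hmem.2⟩
    have := le_csSup (S_finite X ω m).bddAbove hmemS
    have := hmem.1
    linarith
  · rintro ⟨h1, h2⟩
    have hsup := sSup_S_mem X ω m hX0 hpos
    obtain ⟨j, hj, hXj, hlt⟩ := hsup
    have hkey : X j ω < X (m+1) ω - t := by
      rcases Nat.eq_zero_or_pos j with h0 | h0
      · subst h0; rw [hX0]; linarith
      · obtain ⟨k, rfl⟩ : ∃ k, j = k+1 := ⟨j-1, by omega⟩
        by_contra hc
        push_neg at hc
        rw [← hXj] at hlt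
        exact h2 k (by omega) ⟨hc, hlt⟩
    rw [← hXj] at hlt ⊢
    linarith

lemma sSup_eq_sup' :
    sSup {y : ℝ | ∃ j < m+1, X j ω = y ∧ y < X (m+1) ω}
      = (Finset.range (m+1)).sup' (Finset.nonempty_range_iff.2 (by omega))
          (fun j => if X j ω < X (m+1) ω then X j ω else 0) := by
  set S := {y : ℝ | ∃ j < m+1, X j ω = y ∧ y < X (m+1) ω} with hS
  apply le_antisymm
  · obtain ⟨j, hj, hXj, hlt⟩ := sSup_S_mem X ω m hX0 hpos
    rw [← hXj] at hlt
    calc sSup S = X j ω := hXj.symm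
    _ = (if X j ω < X (m+1) ω then X j ω else 0) := by rw [if_pos hlt]
    _ ≤ _ := Finset.le_sup' (fun j => if X j ω < X (m+1) ω then X j ω else 0) (Finset.mem_range.2 hj)
  · apply Finset.sup'_le
    intro j hj
    by_cases h : X j ω < X (m+1) ω
    · rw [if_pos h]
      exact le_csSup (S_finite X ω m).bddAbove ⟨j, Finset.mem_range.1 hj, rfl, h⟩
    · rw [if_neg h]
      exact sSup_S_nonneg X ω m hX0 hpos

end PW

lemma prob_eq {Ω : Type*} [MeasureSpace Ω] [IsProbabilityMeasure (ℙ : Measure Ω)]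
    (X : ℕ → Ω → ℝ)
    (hXmeas : ∀ i, Measurable (X i))
    (hXindep : iIndepFun (fun i : ℕ => X (i + 1)) ℙ)
    (hXunif : ∀ i : ℕ, Measure.map (X (i + 1)) ℙ
      = (volume : Measure ℝ).restrict (Set.Ioc 0 1))
    (m : ℕ) {t : ℝ} (ht0 : 0 < t) (ht1 : t < 1) :
    ℙ {ω | t < X (m+1) ω ∧ ∀ k < m, X (k+1) ω ∉ Ico (X (m+1) ω - t) (X (m+1) ω)}
      = ENNReal.ofReal ((1-t)^(m+1)) := by
  set f : ℕ → Ω → ℝ := fun i ω => X (i+1) ω with hf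
  have hfmeas : ∀ i, Measurable (f i) := fun i => hXmeas _
  set W : Ω → (↥(Finset.range m) → ℝ) := fun ω k => f k ω with hWdef
  have hW : Measurable W := measurable_pi_lambda _ (fun k => hfmeas _)
  -- independence of f m and the tuple W
  have hind : IndepFun (f m) W ℙ := by
    have hdisj : Disjoint ({m} : Finset ℕ) (Finset.range m) := by
      simp [Finset.disjoint_left]
    have h := hXindep.indepFun_finset {m} (Finset.range m) hdisj hfmeas
    have h2 := h.comp (φ := fun g : (↥({m} : Finset ℕ) → ℝ) => g ⟨m, Finset.mem_singleton_self m⟩)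
      (ψ := id) (_mγ := Real.measurableSpace) (measurable_pi_apply _) measurable_id
    exact h2
  have hmap : Measure.map (fun ω => (f m ω, W ω)) ℙ
      = (Measure.map (f m) ℙ).prod (Measure.map W ℙ) :=
    (indepFun_iff_map_prod_eq_prod_map_map (hfmeas m).aemeasurable hW.aemeasurable).1 hind
  -- target set
  set C : Set (ℝ × (↥(Finset.range m) → ℝ)) :=
    {p | t < p.1 ∧ ∀ k, p.2 k ∉ Ico (p.1 - t) p.1} with hCdef
  have hC : MeasurableSet C := by
    have h1 : MeasurableSet {p : ℝ × (↥(Finset.range m) → ℝ) | t < p.1} :=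
      measurable_fst measurableSet_Ioi
    have h2 : ∀ k, MeasurableSet {p : ℝ × (↥(Finset.range m) → ℝ) | p.2 k ∈ Ico (p.1 - t) p.1} := by
      intro k
      have : {p : ℝ × (↥(Finset.range m) → ℝ) | p.2 k ∈ Ico (p.1 - t) p.1}
          = {p : ℝ × (↥(Finset.range m) → ℝ) | p.1 - t ≤ p.2 k}
            ∩ {p : ℝ × (↥(Finset.range m) → ℝ) | p.2 k < p.1} := by
        ext p; simp [Set.mem_Ico, and_comm]
      rw [this]
      have hek : Measurable (fun p : ℝ × (↥(Finset.range m) → ℝ) => p.2 k) :=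
        measurable_snd.eval
      exact (measurableSet_le (measurable_fst.sub measurable_const) hek).inter
        (measurableSet_lt hek measurable_fst)
    have hCeq : C = {p : ℝ × (↥(Finset.range m) → ℝ) | t < p.1}
        ∩ ⋂ k, ({p : ℝ × (↥(Finset.range m) → ℝ) | p.2 k ∈ Ico (p.1 - t) p.1})ᶜ := by
      ext p; simp [hCdef]
    rw [hCeq]
    exact h1.inter (MeasurableSet.iInter fun k => (h2 k).compl)
  have hev : {ω | t < X (m+1) ω ∧ ∀ k < m, X (k+1) ω ∉ Ico (X (m+1) ω - t) (X (m+1) ω)}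
      = (fun ω => (f m ω, W ω)) ⁻¹' C := by
    ext ω
    simp only [hCdef, mem_preimage, mem_setOf_eq, hWdef]
    constructor
    · rintro ⟨h1, h2⟩
      exact ⟨h1, fun k => h2 k (Finset.mem_range.1 k.2)⟩
    · rintro ⟨h1, h2⟩
      exact ⟨h1, fun k hk => h2 ⟨k, Finset.mem_range.2 hk⟩⟩
  -- inner measure computation
  have hinner : ∀ s ∈ Ioc t 1, (Measure.map W ℙ) {v | ∀ k, v k ∉ Ico (s - t) s}
      = ENNReal.ofReal (1-t) ^ m := by
    intro s hs
    have hA : MeasurableSet {v : ↥(Finset.range m) → ℝ | ∀ k, v k ∉ Ico (s - t) s} := by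
      rw [show {v : ↥(Finset.range m) → ℝ | ∀ k, v k ∉ Ico (s - t) s}
          = ⋂ k, (fun v : ↥(Finset.range m) → ℝ => v k) ⁻¹' (Ico (s-t) s)ᶜ by ext v; simp]
      exact MeasurableSet.iInter fun k => (measurable_pi_apply k) measurableSet_Ico.compl
    rw [Measure.map_apply hW hA]
    have hpre : W ⁻¹' {v | ∀ k, v k ∉ Ico (s - t) s}
        = ⋂ j ∈ Finset.range m, f j ⁻¹' (Ico (s-t) s)ᶜ := by
      ext ω
      simp only [mem_preimage, mem_setOf_eq, Set.mem_iInter, hWdef, mem_compl_iff]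
      constructor
      · intro h j hj
        exact h ⟨j, hj⟩
      · intro h k
        exact h k k.2
    rw [hpre, hXindep.measure_inter_preimage_eq_mul (Finset.range m)
      (fun _ _ => measurableSet_Ico.compl)]
    have heach : ∀ j, ℙ (f j ⁻¹' (Ico (s-t) s)ᶜ) = ENNReal.ofReal (1-t) := by
      intro j
      rw [show ℙ (f j ⁻¹' (Ico (s-t) s)ᶜ) = Measure.map (f j) ℙ (Ico (s-t) s)ᶜ from
        (Measure.map_apply (hfmeas j) measurableSet_Ico.compl).symm, hf]
      rw [hXunif j, Measure.restrict_apply measurableSet_Ico.compl]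
      have hsub : Ico (s-t) s ⊆ Ioc (0:ℝ) 1 := by
        intro x hx
        exact ⟨lt_of_lt_of_le (by linarith [hs.1] : (0:ℝ) < s - t) hx.1,
          le_of_lt (lt_of_lt_of_le hx.2 hs.2)⟩
      rw [show (Ico (s-t) s)ᶜ ∩ Ioc (0:ℝ) 1 = Ioc (0:ℝ) 1 \ Ico (s-t) s by
        rw [Set.diff_eq, Set.inter_comm]]
      rw [measure_diff hsub measurableSet_Ico.nullMeasurableSet (by
        rw [Real.volume_Ico]; exact ENNReal.ofReal_ne_top)]
      rw [Real.volume_Ioc, Real.volume_Ico]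
      rw [← ENNReal.ofReal_sub _ (by linarith : (0:ℝ) ≤ s - (s - t))]
      norm_num
    rw [Finset.prod_congr rfl (fun j _ => heach j), Finset.prod_const, Finset.card_range]
  -- assemble
  rw [hev, ← Measure.map_apply ((hfmeas m).prodMk hW) hC, hmap, Measure.prod_apply hC]
  rw [hXunif m]
  have hsec : ∀ s : ℝ, Prod.mk s ⁻¹' C
      = if t < s then {v : ↥(Finset.range m) → ℝ | ∀ k, v k ∉ Ico (s - t) s} else ∅ := by
    intro s
    by_cases h : t < s <;> simp [hCdef, h] <;> ext v <;> simp [h]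
  have : ∫⁻ s, (Measure.map W ℙ) (Prod.mk s ⁻¹' C) ∂((volume : Measure ℝ).restrict (Ioc 0 1))
      = ∫⁻ s in Ioc (0:ℝ) 1, (Ioc t 1).indicator (fun _ => ENNReal.ofReal (1-t) ^ m) s := by
    apply setLIntegral_congr_fun measurableSet_Ioc
    intro s hs
    dsimp only
    rw [hsec s]
    by_cases h : t < s
    · rw [if_pos h, hinner s ⟨h, hs.2⟩, Set.indicator_of_mem (show s ∈ Ioc t 1 from ⟨h, hs.2⟩) _]
    · rw [if_neg h, Set.indicator_of_notMem (fun hmem => h hmem.1), measure_empty]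
  rw [this]
  rw [lintegral_indicator measurableSet_Ioc, Measure.restrict_restrict measurableSet_Ioc]
  rw [show Ioc t 1 ∩ Ioc (0:ℝ) 1 = Ioc t 1 by
    rw [Set.inter_eq_left]; exact fun x hx => ⟨lt_trans ht0 hx.1, hx.2⟩]
  rw [lintegral_const, Measure.restrict_apply_univ, Real.volume_Ioc]
  have hnn : (0:ℝ) ≤ 1 - t := by linarith
  rw [← ENNReal.ofReal_pow hnn, ← ENNReal.ofReal_mul (pow_nonneg hnn m), ← pow_succ]

lemma beta_eval {α : ℝ} (hα0 : 0 < α) (i : ℕ) :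
    ∫ t in Ioc (0:ℝ) 1, t^(α-1) * (1-t)^i
      = (Nat.factorial i : ℝ) / ∏ j ∈ Finset.range (i+1), (α + j) := by
  have key : ((∫ t in Ioc (0:ℝ) 1, t^(α-1) * (1-t)^i : ℝ) : ℂ)
      = Complex.betaIntegral α (i+1) := by
    rw [Complex.betaIntegral, intervalIntegral.integral_of_le zero_le_one]
    have hcongr : ∫ x in Ioc (0:ℝ) 1, (x:ℂ)^((α:ℂ)-1)*(1-(x:ℂ))^(((i:ℂ)+1)-1)
        = ∫ x in Ioc (0:ℝ) 1, ((x^(α-1) * (1-x)^i : ℝ) : ℂ) := by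
      apply setIntegral_congr_fun measurableSet_Ioc
      intro x hx
      dsimp only
      have hx0 : (0:ℝ) ≤ x := hx.1.le
      rw [show ((α:ℂ) - 1) = ((α - 1 : ℝ) : ℂ) by push_cast; ring,
        ← Complex.ofReal_cpow hx0,
        show (((i:ℂ)+1)-1) = ((i:ℕ):ℂ) by push_cast; ring,
        Complex.cpow_natCast]
      push_cast
      ring
    rw [hcongr]
    exact (integral_ofReal (𝕜 := ℂ)).symm
  have h2 : Complex.betaIntegral α (i+1)
      = (((Nat.factorial i : ℝ) / ∏ j ∈ Finset.range (i+1), (α + j) : ℝ) : ℂ) := by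
    rw [show ((i:ℂ)+1) = ((i:ℕ):ℂ)+1 by push_cast; ring]
    rw [Complex.betaIntegral_eval_nat_add_one_right (by simpa using hα0) i]
    push_cast
    ring
  rw [h2] at key
  exact_mod_cast key

-- Step B: deterministic asymptotics
lemma prodPos {α : ℝ} (hα0 : 0 < α) (n : ℕ) : 0 < ∏ j ∈ Finset.range (n+1), (α + j) :=
  Finset.prod_pos fun j _ => by positivity

lemma ratio_tendsto {α : ℝ} (hα0 : 0 < α) :
    Tendsto (fun n : ℕ => (Nat.factorial (n+1) : ℝ) / (∏ j ∈ Finset.range (n+1), (α + j))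
        / (Real.Gamma α * (n:ℝ) ^ ((1:ℝ) - α))) atTop (𝓝 1) := by
  have hΓ : Real.Gamma α ≠ 0 := (Real.Gamma_pos_of_pos hα0).ne'
  have h1 : Tendsto (fun n : ℕ => Real.GammaSeq α n / Real.Gamma α) atTop (𝓝 1) := by
    simpa [div_self hΓ] using (Real.GammaSeq_tendsto_Gamma α).div_const (Real.Gamma α)
  have h2 : Tendsto (fun n : ℕ => ((n:ℝ) + 1) / n) atTop (𝓝 1) := by
    have h := (tendsto_one_div_atTop_nhds_zero_nat (𝕜 := ℝ)).const_add 1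
    rw [add_zero] at h
    apply h.congr'
    filter_upwards [eventually_gt_atTop 0] with n hn
    have hn' : (n:ℝ) ≠ 0 := by positivity
    field_simp
  have key : ∀ᶠ n : ℕ in atTop, (Nat.factorial (n+1) : ℝ) / (∏ j ∈ Finset.range (n+1), (α + j))
        / (Real.Gamma α * (n:ℝ) ^ ((1:ℝ) - α))
      = (Real.GammaSeq α n / Real.Gamma α) * (((n:ℝ) + 1) / n) := by
    filter_upwards [eventually_gt_atTop 0] with n hn
    have hn' : (0:ℝ) < n := by exact_mod_cast hn
    have hp := prodPos hα0 n
    rw [Real.GammaSeq]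
    rw [Nat.factorial_succ]
    push_cast
    rw [Real.rpow_sub hn', Real.rpow_one]
    have hnα : (0:ℝ) < (n:ℝ) ^ (α:ℝ) := Real.rpow_pos_of_pos hn' _
    field_simp
  have goal := (h1.mul h2).congr' (Filter.EventuallyEq.symm key)
  simpa using goal

lemma sum_formula {α : ℝ} (hα0 : 0 < α) (hα1 : α < 1) (n : ℕ) :
    ∑ i ∈ Finset.Icc 1 n, α * (Nat.factorial i : ℝ) / ∏ j ∈ Finset.range (i+1), (α + j)
      = α/(1-α) * ((Nat.factorial (n+1) : ℝ) / ∏ j ∈ Finset.range (n+1), (α + j) - 1/α) := by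
  induction n with
  | zero => simp [Finset.Icc_self]
  | succ n ih =>
    rw [Finset.sum_Icc_succ_top (by omega), ih]
    have hp : (0:ℝ) < ∏ j ∈ Finset.range (n+1), (α + j) := prodPos hα0 n
    have hp2 : (0:ℝ) < ∏ j ∈ Finset.range (n+2), (α + j) := prodPos hα0 (n+1)
    have hprod : ∏ j ∈ Finset.range (n+2), (α + j)
        = (∏ j ∈ Finset.range (n+1), (α + j)) * (α + (n+1)) := by
      rw [Finset.prod_range_succ]; push_cast; ring
    have hfac : (Nat.factorial (n+2) : ℝ) = (Nat.factorial (n+1) : ℝ) * (n+2) := by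
      rw [Nat.factorial_succ]; push_cast; ring
    have h1α : (1:ℝ) - α ≠ 0 := by linarith
    have hαn : α + ((n:ℝ)+1) ≠ 0 := by positivity
    rw [hprod, hfac]
    field_simp
    ring

lemma stepB {α : ℝ} (hα0 : 0 < α) (hα1 : α < 1) (E : ℕ → ℝ)
    (hE : ∀ n, E n = ∑ i ∈ Finset.Icc 1 n,
      α * (Nat.factorial i : ℝ) / ∏ j ∈ Finset.range (i+1), (α + j)) :
    Asymptotics.IsEquivalent atTop (fun n : ℕ => E n)
      (fun n : ℕ => Real.Gamma (α + 1) / (1 - α) * (n : ℝ) ^ ((1 : ℝ) - α)) := by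
  have hΓα : (0:ℝ) < Real.Gamma α := Real.Gamma_pos_of_pos hα0
  have h1α : (0:ℝ) < 1 - α := by linarith
  have hΓ1 : Real.Gamma (α+1) = α * Real.Gamma α := by
    rw [Real.Gamma_add_one hα0.ne']
  apply Asymptotics.isEquivalent_of_tendsto_one
  · -- ratio tends to 1
    have hpow : Tendsto (fun n : ℕ => ((n:ℝ) ^ ((1:ℝ) - α))) atTop atTop :=
      (tendsto_rpow_atTop h1α).comp tendsto_natCast_atTop_atTop
    have hz : Tendsto (fun n : ℕ => 1/(α * Real.Gamma α * (n:ℝ) ^ ((1:ℝ) - α))) atTop (𝓝 0) := by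
      apply Tendsto.div_atTop tendsto_const_nhds
      exact Tendsto.const_mul_atTop (by positivity) hpow
    have h1 := ratio_tendsto hα0
    have hlim := h1.sub hz
    rw [sub_zero] at hlim
    apply hlim.congr'
    filter_upwards [eventually_gt_atTop 0] with n hn
    have hn' : (0:ℝ) < (n:ℝ) ^ ((1:ℝ) - α) := by
      apply Real.rpow_pos_of_pos; exact_mod_cast hn
    rw [Pi.div_apply, hE, sum_formula hα0 hα1, hΓ1]
    have hp2 : (0:ℝ) < ∏ j ∈ Finset.range (n+2), (α + j) := prodPos hα0 (n+1)
    field_simp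

section Main
variable {Ω : Type*} [MeasureSpace Ω] [IsProbabilityMeasure (ℙ : Measure Ω)]
    (X : ℕ → Ω → ℝ)
    (hX0 : ∀ ω, X 0 ω = 0)
    (hXmeas : ∀ i, Measurable (X i))
    (hXindep : iIndepFun (fun i : ℕ => X (i + 1)) ℙ)
    (hXunif : ∀ i : ℕ, Measure.map (X (i + 1)) ℙ
      = (volume : Measure ℝ).restrict (Set.Ioc 0 1))
    (Z : ℕ → Ω → ℝ)
    (hZ : ∀ k ω, Z k ω = X k ω - sSup {y : ℝ | ∃ j < k, X j ω = y ∧ y < X k ω})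
    {α : ℝ} (hα0 : 0 < α) (hα1 : α < 1)

include hX0 hXmeas hXindep hXunif hZ hα0 hα1

lemma good_ae (i : ℕ) : ∀ᵐ ω ∂(ℙ : Measure Ω), X (i+1) ω ∈ Ioc (0:ℝ) 1 := by
  rw [ae_iff]
  have : {ω | ¬ X (i+1) ω ∈ Ioc (0:ℝ) 1} = X (i+1) ⁻¹' (Ioc (0:ℝ) 1)ᶜ := rfl
  rw [this, ← Measure.map_apply (hXmeas _) measurableSet_Ioc.compl, hXunif i,
    Measure.restrict_apply measurableSet_Ioc.compl]
  simp

lemma integral_Zpow (m : ℕ) :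
    Integrable (fun ω => Z (m+1) ω ^ α) (ℙ : Measure Ω) ∧
    ∫ ω, Z (m+1) ω ^ α ∂(ℙ : Measure Ω)
      = α * (Nat.factorial (m+1) : ℝ) / ∏ j ∈ Finset.range (m+2), (α + j) := by
  -- measurable version of Z (m+1)
  set g : Ω → ℝ := fun ω => X (m+1) ω - (Finset.range (m+1)).sup'
      (Finset.nonempty_range_iff.2 (by omega))
      (fun j => if X j ω < X (m+1) ω then X j ω else 0) with hg
  have hgmeas : Measurable g := by
    apply (hXmeas (m+1)).sub
    have hsup := Finset.measurable_sup' (Finset.nonempty_range_iff.2 (by omega : m+1 ≠ 0))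
      (f := fun (j : ℕ) (ω : Ω) => if X j ω < X (m+1) ω then X j ω else 0)
      (fun j _ => Measurable.ite (measurableSet_lt (hXmeas j) (hXmeas (m+1)))
        (hXmeas j) measurable_const)
    have heq : (Finset.range (m+1)).sup' (Finset.nonempty_range_iff.2 (by omega : m+1 ≠ 0))
        (fun (j : ℕ) (ω : Ω) => if X j ω < X (m+1) ω then X j ω else 0)
        = fun ω => (Finset.range (m+1)).sup' (Finset.nonempty_range_iff.2 (by omega : m+1 ≠ 0))
          (fun j => if X j ω < X (m+1) ω then X j ω else 0) := by
      funext ω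
      exact Finset.sup'_apply _ _ _
    rw [heq] at hsup
    exact hsup
  have hgood := good_ae X hX0 hXmeas hXindep hXunif Z hZ hα0 hα1 m
  have hZg : (fun ω => Z (m+1) ω) =ᵐ[ℙ] g := by
    filter_upwards [hgood] with ω hω
    rw [hZ, hg, sSup_eq_sup' X ω m (hX0 ω) hω.1]
  have hZmem : ∀ᵐ ω ∂(ℙ : Measure Ω), Z (m+1) ω ∈ Ioc (0:ℝ) 1 := by
    filter_upwards [hgood] with ω hω
    rw [hZ]
    constructor
    · have := sSup_S_lt X ω m (hX0 ω) hω.1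
      linarith
    · have := sSup_S_nonneg X ω m (hX0 ω) hω.1
      have := hω.2
      linarith
  have haesm : AEStronglyMeasurable (fun ω => Z (m+1) ω ^ α) (ℙ : Measure Ω) := by
    apply AEStronglyMeasurable.congr (f := fun ω => g ω ^ α)
    · exact ((Real.continuous_rpow_const hα0.le).measurable.comp hgmeas).aestronglyMeasurable
    · filter_upwards [hZg] with ω hω; rw [hω]
  have hbound : ∀ᵐ ω ∂(ℙ : Measure Ω), ‖Z (m+1) ω ^ α‖ ≤ 1 := by
    filter_upwards [hZmem] with ω hω
    rw [Real.norm_of_nonneg (Real.rpow_nonneg hω.1.le α)]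
    exact Real.rpow_le_one hω.1.le hω.2 hα0.le
  have hint : Integrable (fun ω => Z (m+1) ω ^ α) (ℙ : Measure Ω) :=
    Integrable.mono' (integrable_const 1) haesm hbound
  refine ⟨hint, ?_⟩
  -- Bochner → lintegral
  have hnn : 0 ≤ᵐ[ℙ] (fun ω => Z (m+1) ω ^ α) := by
    filter_upwards [hZmem] with ω hω
    exact Real.rpow_nonneg hω.1.le α
  rw [integral_eq_lintegral_of_nonneg_ae hnn haesm]
  -- layer cake
  have hZnn : 0 ≤ᵐ[ℙ] (fun ω => Z (m+1) ω) := by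
    filter_upwards [hZmem] with ω hω; exact hω.1.le
  have hZam : AEMeasurable (fun ω => Z (m+1) ω) (ℙ : Measure Ω) :=
    hgmeas.aemeasurable.congr hZg.symm
  have hgi : ∀ t > (0:ℝ), IntervalIntegrable (fun s : ℝ => α * s ^ (α - 1)) volume 0 t :=
    fun t _ => (intervalIntegral.intervalIntegrable_rpow' (by linarith)).const_mul α
  have hgnn : ∀ᵐ s ∂(volume.restrict (Ioi (0:ℝ))), 0 ≤ α * s ^ (α - 1) := by
    rw [ae_restrict_iff' measurableSet_Ioi]
    filter_upwards with s hs
    have : (0:ℝ) < s := hs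
    positivity
  have hlayer := lintegral_comp_eq_lintegral_meas_lt_mul (ℙ : Measure Ω) hZnn hZam hgi hgnn
  have hcongr1 : ∫⁻ ω, ENNReal.ofReal (Z (m+1) ω ^ α) ∂(ℙ : Measure Ω)
      = ∫⁻ ω, ENNReal.ofReal (∫ s in (0:ℝ)..(Z (m+1) ω), α * s ^ (α - 1)) ∂ℙ := by
    apply lintegral_congr_ae
    filter_upwards [hZmem] with ω hω
    congr 1
    rw [intervalIntegral.integral_const_mul, integral_rpow (Or.inl (by linarith))]
    rw [Real.zero_rpow (by linarith : α - 1 + 1 ≠ 0)]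
    rw [sub_add_cancel, sub_zero, mul_div_assoc', mul_div_cancel_left₀ _ hα0.ne']
  rw [hcongr1, hlayer]
  -- identify tail probabilities
  have htail : ∫⁻ s in Ioi (0:ℝ), (ℙ : Measure Ω) {a | s < Z (m+1) a} * ENNReal.ofReal (α * s ^ (α-1))
      = ∫⁻ s in Ioi (0:ℝ), (Ioo (0:ℝ) 1).indicator
          (fun s => ENNReal.ofReal ((1-s)^(m+1) * (α * s ^ (α-1)))) s := by
    apply setLIntegral_congr_fun measurableSet_Ioi
    intro s hs
    dsimp only
    have hs0 : (0:ℝ) < s := hs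
    by_cases hs1 : s < 1
    · have hprob : (ℙ : Measure Ω) {a | s < Z (m+1) a}
          = ENNReal.ofReal ((1-s)^(m+1)) := by
        have hevae : {a | s < Z (m+1) a} =ᵐ[ℙ]
            {ω | s < X (m+1) ω ∧ ∀ k < m, X (k+1) ω ∉ Ico (X (m+1) ω - s) (X (m+1) ω)} := by
          filter_upwards [hgood] with ω hω
          have := charZ X ω m (hX0 ω) hω.1 s
          simp only [eq_iff_iff, Set.mem_setOf_eq]
          rw [← hZ] at this
          exact this
        rw [measure_congr hevae]
        exact prob_eq X hXmeas hXindep hXunif m hs0 hs1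
      rw [hprob, Set.indicator_of_mem (show s ∈ Ioo (0:ℝ) 1 from ⟨hs0, hs1⟩)]
      rw [ENNReal.ofReal_mul (pow_nonneg (by linarith : (0:ℝ) ≤ 1 - s) (m+1))]
    · push_neg at hs1
      have hzero : (ℙ : Measure Ω) {a | s < Z (m+1) a} = 0 := by
        refine measure_mono_null ?_ (ae_iff.1 hZmem)
        intro ω hω
        simp only [Set.mem_setOf_eq] at hω ⊢
        intro hmem
        linarith [hmem.2]
      rw [hzero, Set.indicator_of_notMem (fun hmem => absurd hmem.2 (not_lt.2 hs1)), zero_mul]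
  rw [htail, lintegral_indicator measurableSet_Ioo, Measure.restrict_restrict measurableSet_Ioo,
    show Ioo (0:ℝ) 1 ∩ Ioi 0 = Ioo 0 1 by rw [Set.inter_eq_left]; exact fun x hx => hx.1]
  -- lintegral → Bochner on (0,1)
  have hIntOn : IntegrableOn (fun s : ℝ => (1-s)^(m+1) * (α * s ^ (α-1))) (Ioo 0 1) volume := by
    have h1 : IntegrableOn (fun s : ℝ => α * s ^ (α-1)) (Ioo 0 1) volume := by
      have := (hgi 1 one_pos)
      rw [intervalIntegrable_iff_integrableOn_Ioo_of_le zero_le_one] at this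
      exact this
    apply Integrable.mono' h1
    · apply ContinuousOn.aestronglyMeasurable _ measurableSet_Ioo
      intro s hs
      apply ContinuousWithinAt.mul
      · exact ((continuous_const.sub continuous_id).pow (m+1)).continuousWithinAt
      · exact (continuous_const.continuousWithinAt.mul
          ((Real.continuousAt_rpow_const s (α-1) (Or.inl hs.1.ne')).continuousWithinAt))
    · rw [ae_restrict_iff' measurableSet_Ioo]
      filter_upwards with s hs
      have hs0 : (0:ℝ) < s := hs.1
      have hs1 : s < 1 := hs.2
      have hx : (0:ℝ) < s ^ (α-1) := Real.rpow_pos_of_pos hs0 _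
      have h1s : (0:ℝ) ≤ 1 - s := by linarith
      rw [Real.norm_of_nonneg (by positivity)]
      have hle : (1-s)^(m+1) ≤ 1 := pow_le_one₀ h1s (by linarith)
      calc (1-s)^(m+1) * (α * s ^ (α-1)) ≤ 1 * (α * s ^ (α-1)) := by
            apply mul_le_mul_of_nonneg_right hle (by positivity)
      _ = α * s ^ (α-1) := one_mul _
  have hnnIoo : 0 ≤ᵐ[volume.restrict (Ioo (0:ℝ) 1)]
      (fun s : ℝ => (1-s)^(m+1) * (α * s ^ (α-1))) := by
    refine (ae_restrict_iff' measurableSet_Ioo).2 ?_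
    filter_upwards with s hs
    have hs0 : (0:ℝ) < s := hs.1
    have h1s : (0:ℝ) ≤ 1 - s := by linarith [hs.2]
    have hx : (0:ℝ) < s ^ (α-1) := Real.rpow_pos_of_pos hs0 _
    positivity
  rw [← ofReal_integral_eq_lintegral_ofReal hIntOn hnnIoo]
  rw [ENNReal.toReal_ofReal (integral_nonneg_of_ae hnnIoo)]
  rw [← integral_Ioc_eq_integral_Ioo]
  rw [setIntegral_congr_fun measurableSet_Ioc
    (show ∀ s ∈ Ioc (0:ℝ) 1, (1-s)^(m+1) * (α * s ^ (α-1)) = α * (s^(α-1) * (1-s)^(m+1))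
      from fun s _ => by ring)]
  rw [MeasureTheory.integral_const_mul, beta_eval hα0 (m+1)]
  rw [mul_div_assoc]
end Main

theorem stmt6 {Ω : Type*} [MeasureSpace Ω] [IsProbabilityMeasure (ℙ : Measure Ω)]
    (X : ℕ → Ω → ℝ)
    (hX0 : ∀ ω, X 0 ω = 0)
    (hXmeas : ∀ i, Measurable (X i))
    (hXindep : iIndepFun (fun i : ℕ => X (i + 1)) ℙ)
    (hXunif : ∀ i : ℕ, Measure.map (X (i + 1)) ℙ
      = (volume : Measure ℝ).restrict (Set.Ioc 0 1))
    (Z : ℕ → Ω → ℝ)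
    (hZ : ∀ k ω, Z k ω = X k ω - sSup {y : ℝ | ∃ j < k, X j ω = y ∧ y < X k ω})
    (α : ℝ) (hα0 : 0 < α) (hα1 : α < 1)
    (E : ℕ → ℝ)
    (hE : ∀ n : ℕ, E n = ∫ ω, ∑ i ∈ Finset.Icc 1 n, Z i ω ^ α ∂ℙ) :
    Asymptotics.IsEquivalent atTop (fun n : ℕ => E n)
      (fun n : ℕ => Real.Gamma (α + 1) / (1 - α) * (n : ℝ) ^ ((1 : ℝ) - α)) := by
  have hval : ∀ i : ℕ, 1 ≤ i → (Integrable (fun ω => Z i ω ^ α) (ℙ : Measure Ω) ∧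
      ∫ ω, Z i ω ^ α ∂(ℙ : Measure Ω)
        = α * (Nat.factorial i : ℝ) / ∏ j ∈ Finset.range (i+1), (α + j)) := by
    intro i hi
    obtain ⟨m, rfl⟩ : ∃ m, i = m+1 := ⟨i-1, by omega⟩
    exact integral_Zpow X hX0 hXmeas hXindep hXunif Z hZ hα0 hα1 m
  apply stepB hα0 hα1
  intro n
  rw [hE n, integral_finset_sum _ (fun i hi => (hval i (Finset.mem_Icc.1 hi).1).1)]
  exact Finset.sum_congr rfl (fun i hi => (hval i (Finset.mem_Icc.1 hi).1).2)
end

section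
/- Cov[Z_1^α, Z_2^α] = ((α-2)Γ(2α+3) + 2(α+2)Γ(α+2)^2) / (2(α+1)^2(α+2)Γ(2α+3)) for α > 0; this covariance is zero if and only if α = 1, positive for α > 1 and negative for 0 < α < 1. -/
open MeasureTheory ProbabilityTheory Real Set Filter

lemma realBeta {a b : ℝ} (ha : 0 < a) (hb : 0 < b) :
    ∫ x in (0:ℝ)..1, x ^ (a-1) * (1-x) ^ (b-1)
      = Real.Gamma a * Real.Gamma b / Real.Gamma (a+b) := by
  have h := Complex.Gamma_mul_Gamma_eq_betaIntegral (s := (a:ℂ)) (t := (b:ℂ))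
    (by simpa using ha) (by simpa using hb)
  have hbeta : Complex.betaIntegral (a:ℂ) (b:ℂ)
      = ((∫ x in (0:ℝ)..1, x ^ (a-1) * (1-x) ^ (b-1) : ℝ) : ℂ) := by
    rw [Complex.betaIntegral, ← intervalIntegral.integral_ofReal]
    refine intervalIntegral.integral_congr fun x hx => ?_
    rw [uIcc_of_le zero_le_one] at hx
    push_cast
    rw [Complex.ofReal_cpow hx.1, Complex.ofReal_cpow (by linarith [hx.2] : (0:ℝ) ≤ 1 - x)]
    push_cast; ring
  rw [hbeta, ← Complex.ofReal_add, Complex.Gamma_ofReal, Complex.Gamma_ofReal,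
    Complex.Gamma_ofReal, ← Complex.ofReal_mul, ← Complex.ofReal_mul] at h
  have := Complex.ofReal_injective h
  have hpos : Real.Gamma (a+b) ≠ 0 := (Real.Gamma_pos_of_pos (by linarith)).ne'
  field_simp
  linarith [this]

lemma inner_int {α x : ℝ} (hα : 0 < α) (h0x : 0 ≤ x) (hx1 : x ≤ 1) :
    ∫ y in Ioc (0:ℝ) 1, (y - if x < y then x else 0) ^ α
      = (x ^ (α+1) + (1-x) ^ (α+1)) / (α+1) := by
  have hα1 : α + 1 ≠ 0 := by positivity
  have e1 : ∫ y in (0:ℝ)..x, (y - if x < y then x else 0) ^ α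
      = x ^ (α+1) / (α+1) := by
    rw [intervalIntegral.integral_congr (g := fun y => y ^ α) ?_]
    · rw [integral_rpow (Or.inl (by linarith)), Real.zero_rpow hα1]; ring
    · intro y hy
      rw [uIcc_of_le h0x] at hy
      simp only [if_neg (not_lt.2 hy.2), sub_zero]
  have e2 : ∫ y in x..(1:ℝ), (y - if x < y then x else 0) ^ α
      = (1-x) ^ (α+1) / (α+1) := by
    rw [intervalIntegral.integral_congr_ae (g := fun y => (y - x) ^ α) ?_]
    · rw [show (fun y : ℝ => (y - x) ^ α) = fun y => (fun u => u ^ α) (y - x) from rfl,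
        intervalIntegral.integral_comp_sub_right (fun u => u ^ α) x, sub_self,
        integral_rpow (Or.inl (by linarith)), Real.zero_rpow hα1]
      ring
    · refine ae_of_all _ fun y hy => ?_
      rw [uIoc_of_le hx1] at hy
      simp only [if_pos hy.1]
  have i1 : IntervalIntegrable (fun y => (y - if x < y then x else 0) ^ α) volume 0 x := by
    refine (intervalIntegral.intervalIntegrable_rpow (r := α) (Or.inl hα.le)).congr ?_
    intro y hy
    rw [uIoc_of_le h0x] at hy
    simp only [if_neg (not_lt.2 hy.2), sub_zero]
  have i2 : IntervalIntegrable (fun y => (y - if x < y then x else 0) ^ α) volume x 1 := by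
    have base : IntervalIntegrable (fun u : ℝ => u ^ α) volume 0 (1-x) :=
      intervalIntegral.intervalIntegrable_rpow (Or.inl hα.le)
    have i2' := base.comp_sub_right x
    rw [zero_add, sub_add_cancel] at i2'
    refine i2'.congr ?_
    intro y hy
    rw [uIoc_of_le hx1] at hy
    simp only [if_pos hy.1]
  rw [← intervalIntegral.integral_of_le zero_le_one,
    ← intervalIntegral.integral_add_adjacent_intervals i1 i2, e1, e2]
  ring

lemma refl_int (g : ℝ → ℝ) : ∫ x in Ioc (0:ℝ) 1, g (1-x) = ∫ x in Ioc (0:ℝ) 1, g x := by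
  rw [← intervalIntegral.integral_of_le zero_le_one, ← intervalIntegral.integral_of_le zero_le_one]
  simpa using intervalIntegral.integral_comp_sub_left (a := 0) (b := 1) g 1

lemma int_rpow {β : ℝ} (hβ : 0 < β) : ∫ x in Ioc (0:ℝ) 1, x ^ β = 1 / (β + 1) := by
  rw [← intervalIntegral.integral_of_le zero_le_one, integral_rpow (Or.inl (by linarith)),
    Real.zero_rpow (by positivity), Real.one_rpow]
  ring

lemma w_cont (β : ℝ) (hβ : 0 ≤ β) : Continuous (fun x : ℝ => x ^ β + (1-x) ^ β) := by
  have h1 : Continuous (fun x : ℝ => x ^ β) :=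
    continuous_iff_continuousAt.2 fun x => Real.continuousAt_rpow_const x β (Or.inr hβ)
  exact h1.add (h1.comp (continuous_const.sub continuous_id))

lemma w_deriv {β x : ℝ} (hx0 : 0 < x) (hx1 : x < 1) :
    HasDerivAt (fun x : ℝ => x ^ β + (1-x) ^ β)
      (β * x ^ (β - 1) - β * (1-x) ^ (β - 1)) x := by
  have h1 : HasDerivAt (fun x : ℝ => x ^ β) (β * x ^ (β - 1)) x :=
    Real.hasDerivAt_rpow_const (Or.inl hx0.ne')
  have h2 : HasDerivAt (fun x : ℝ => (1-x) ^ β) (β * (1-x) ^ (β - 1) * (-1)) x :=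
    (Real.hasDerivAt_rpow_const (x := 1 - x) (Or.inl (by linarith))).comp x
      ((hasDerivAt_id x).const_sub 1)
  simpa [mul_neg, sub_eq_add_neg] using h1.fun_add h2

lemma w_mono {β : ℝ} (hβ : 1 < β) :
    StrictMonoOn (fun x : ℝ => x ^ β + (1-x) ^ β) (Icc (1/2 : ℝ) 1) := by
  refine strictMonoOn_of_deriv_pos (convex_Icc _ _) ((w_cont β (by linarith)).continuousOn) ?_
  intro x hx
  rw [interior_Icc] at hx
  have hx0 : 0 < x := lt_trans (by norm_num) hx.1
  rw [(w_deriv hx0 hx.2).deriv]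
  have h : (1-x) ^ (β - 1) < x ^ (β - 1) :=
    Real.rpow_lt_rpow (by linarith [hx.1, hx.2]) (by linarith [hx.1, hx.2]) (by linarith)
  nlinarith

lemma w_anti {β : ℝ} (hβ0 : 0 < β) (hβ : β < 1) :
    StrictAntiOn (fun x : ℝ => x ^ β + (1-x) ^ β) (Icc (1/2 : ℝ) 1) := by
  refine strictAntiOn_of_deriv_neg (convex_Icc _ _) ((w_cont β (by linarith)).continuousOn) ?_
  intro x hx
  rw [interior_Icc] at hx
  have hx0 : 0 < x := lt_trans (by norm_num) hx.1
  rw [(w_deriv hx0 hx.2).deriv]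
  have h : x ^ (β - 1) < (1-x) ^ (β - 1) :=
    Real.rpow_lt_rpow_of_neg (by linarith [hx.1, hx.2]) (by linarith [hx.1, hx.2]) (by linarith)
  nlinarith

lemma w_symm (β x : ℝ) : (1-x) ^ β + (1-(1-x)) ^ β = x ^ β + (1-x) ^ β := by
  rw [show 1-(1-x) = x by ring]; ring

lemma w_eq_max (β x : ℝ) :
    x ^ β + (1-x) ^ β = (max x (1-x)) ^ β + (1 - max x (1-x)) ^ β := by
  rcases le_total x (1-x) with h|h
  · rw [max_eq_right h, w_symm]
  · rw [max_eq_left h]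

lemma max_mem {x : ℝ} (hx : x ∈ Icc (0:ℝ) 1) : max x (1-x) ∈ Icc (1/2 : ℝ) 1 := by
  obtain ⟨h0, h1⟩ := hx
  rcases le_total x (1-x) with h|h
  · rw [max_eq_right h]; constructor <;> [linarith; linarith]
  · rw [max_eq_left h]; constructor <;> [linarith; linarith]


lemma key_nonneg {α : ℝ} (hα : 1 < α) {x y : ℝ} (hx : x ∈ Icc (0:ℝ) 1)
    (hy : y ∈ Icc (0:ℝ) 1) :
    0 ≤ ((x^α + (1-x)^α) - (y^α + (1-y)^α))
      * ((x^(α+1) + (1-x)^(α+1)) - (y^(α+1) + (1-y)^(α+1))) := by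
  have ha := max_mem hx
  have hb := max_mem hy
  rw [w_eq_max α x, w_eq_max α y, w_eq_max (α+1) x, w_eq_max (α+1) y]
  set a := max x (1-x)
  set b := max y (1-y)
  rcases lt_trichotomy a b with h|h|h
  · have h1 := w_mono hα ha hb h
    have h2 := w_mono (show (1:ℝ) < α+1 by linarith) ha hb h
    dsimp only at h1 h2
    nlinarith
  · simp [h]
  · have h1 := w_mono hα hb ha h
    have h2 := w_mono (show (1:ℝ) < α+1 by linarith) hb ha h
    dsimp only at h1 h2
    nlinarith

lemma key_nonpos {α : ℝ} (hα0 : 0 < α) (hα : α < 1) {x y : ℝ} (hx : x ∈ Icc (0:ℝ) 1)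
    (hy : y ∈ Icc (0:ℝ) 1) :
    ((x^α + (1-x)^α) - (y^α + (1-y)^α))
      * ((x^(α+1) + (1-x)^(α+1)) - (y^(α+1) + (1-y)^(α+1))) ≤ 0 := by
  have ha := max_mem hx
  have hb := max_mem hy
  rw [w_eq_max α x, w_eq_max α y, w_eq_max (α+1) x, w_eq_max (α+1) y]
  set a := max x (1-x)
  set b := max y (1-y)
  rcases lt_trichotomy a b with h|h|h
  · have h1 := w_anti hα0 hα ha hb h
    have h2 := w_mono (show (1:ℝ) < α+1 by linarith) ha hb h
    dsimp only at h1 h2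
    nlinarith
  · simp [h]
  · have h1 := w_anti hα0 hα hb ha h
    have h2 := w_mono (show (1:ℝ) < α+1 by linarith) hb ha h
    dsimp only at h1 h2
    nlinarith

lemma max_eq_self {x : ℝ} (h : 1/2 ≤ x) : max x (1-x) = x := max_eq_left (by linarith)

lemma key_pos {α : ℝ} (hα : 1 < α) {x y : ℝ} (hx : x ∈ Ioc (1/2 : ℝ) (5/8))
    (hy : y ∈ Ioc (3/4 : ℝ) (7/8)) :
    0 < ((x^α + (1-x)^α) - (y^α + (1-y)^α))
      * ((x^(α+1) + (1-x)^(α+1)) - (y^(α+1) + (1-y)^(α+1))) := by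
  have hx' : x ∈ Icc (1/2:ℝ) 1 := ⟨hx.1.le, by linarith [hx.2]⟩
  have hy' : y ∈ Icc (1/2:ℝ) 1 := ⟨by linarith [hy.1], by linarith [hy.2]⟩
  have hxy : x < y := by linarith [hx.2, hy.1]
  have h1 := w_mono hα hx' hy' hxy
  have h2 := w_mono (show (1:ℝ) < α+1 by linarith) hx' hy' hxy
  dsimp only at h1 h2
  nlinarith

lemma key_neg {α : ℝ} (hα0 : 0 < α) (hα : α < 1) {x y : ℝ} (hx : x ∈ Ioc (1/2 : ℝ) (5/8))
    (hy : y ∈ Ioc (3/4 : ℝ) (7/8)) :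
    ((x^α + (1-x)^α) - (y^α + (1-y)^α))
      * ((x^(α+1) + (1-x)^(α+1)) - (y^(α+1) + (1-y)^(α+1))) < 0 := by
  have hx' : x ∈ Icc (1/2:ℝ) 1 := ⟨hx.1.le, by linarith [hx.2]⟩
  have hy' : y ∈ Icc (1/2:ℝ) 1 := ⟨by linarith [hy.1], by linarith [hy.2]⟩
  have hxy : x < y := by linarith [hx.2, hy.1]
  have h1 := w_anti hα0 hα hx' hy' hxy
  have h2 := w_mono (show (1:ℝ) < α+1 by linarith) hx' hy' hxy
  dsimp only at h1 h2
  nlinarith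

noncomputable abbrev m01 : Measure ℝ := volume.restrict (Ioc (0:ℝ) 1)

instance : IsProbabilityMeasure m01 := by
  constructor
  rw [Measure.restrict_apply_univ, Real.volume_Ioc]
  norm_num

lemma int_bdd {f : ℝ → ℝ} (hm : AEStronglyMeasurable f m01) {c : ℝ}
    (hb : ∀ x ∈ Ioc (0:ℝ) 1, ‖f x‖ ≤ c) : Integrable f m01 :=
  Integrable.mono' (integrable_const c) hm
    ((ae_restrict_iff' measurableSet_Ioc).2 (ae_of_all _ hb))

lemma rpow_cont {β : ℝ} (hβ : 0 ≤ β) : Continuous fun x : ℝ => x ^ β :=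
  continuous_iff_continuousAt.2 fun x => Real.continuousAt_rpow_const x β (Or.inr hβ)

lemma rpow_meas {β : ℝ} (hβ : 0 ≤ β) : Measurable fun x : ℝ => x ^ β :=
  (rpow_cont hβ).measurable

lemma rpow_bd1 {β x : ℝ} (hβ : 0 < β) (hx : x ∈ Ioc (0:ℝ) 1) : ‖x ^ β‖ ≤ 1 := by
  rw [Real.norm_eq_abs, abs_of_nonneg (Real.rpow_nonneg hx.1.le _)]
  exact Real.rpow_le_one hx.1.le hx.2 hβ.le

lemma int_rpow_m {β : ℝ} (hβ : 0 < β) : Integrable (fun x : ℝ => x ^ β) m01 :=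
  int_bdd (rpow_meas hβ.le).aestronglyMeasurable (fun x hx => rpow_bd1 hβ hx)

lemma refl_meas {β : ℝ} (hβ : 0 ≤ β) : Measurable fun x : ℝ => (1-x) ^ β :=
  (rpow_meas hβ).comp (measurable_const.sub measurable_id)

lemma refl_bd1 {β x : ℝ} (hβ : 0 < β) (hx : x ∈ Ioc (0:ℝ) 1) : ‖(1-x) ^ β‖ ≤ 1 := by
  rw [Real.norm_eq_abs, abs_of_nonneg (Real.rpow_nonneg (by linarith [hx.2]) _)]
  exact Real.rpow_le_one (by linarith [hx.2]) (by linarith [hx.1]) hβ.le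

lemma int_refl_m {β : ℝ} (hβ : 0 < β) : Integrable (fun x : ℝ => (1-x) ^ β) m01 :=
  int_bdd (refl_meas hβ.le).aestronglyMeasurable (fun x hx => refl_bd1 hβ hx)
section Values
variable {α : ℝ}

lemma int_mixed_m (hα : 0 < α) :
    Integrable (fun x : ℝ => x ^ α * (1-x) ^ (α+1)) m01 := by
  refine int_bdd ((rpow_meas hα.le).mul (refl_meas (by linarith))).aestronglyMeasurable
    (c := 1) (fun x hx => ?_)
  calc ‖x ^ α * (1-x) ^ (α+1)‖ ≤ ‖x ^ α‖ * ‖(1-x) ^ (α+1)‖ := norm_mul_le _ _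
  _ ≤ 1 := by
      have h1 := rpow_bd1 hα hx
      have h2 := refl_bd1 (show (0:ℝ) < α+1 by linarith) hx
      nlinarith [norm_nonneg (x ^ α), norm_nonneg ((1-x) ^ (α+1))]

lemma V1 (hα : 0 < α) : ∫ x, x ^ α ∂m01 = 1 / (α+1) := int_rpow hα

lemma intPhi (hα : 0 < α) :
    ∫ x, (x ^ (α+1) + (1-x) ^ (α+1)) ∂m01 = 2/(α+2) := by
  rw [integral_add (int_rpow_m (by linarith)) (int_refl_m (by linarith)),
    refl_int (fun x => x ^ (α+1)), int_rpow (by linarith)]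
  have : α + 1 + 1 = α + 2 := by ring
  rw [this]; ring

lemma V2 (hα : 0 < α) :
    ∫ x, ((x ^ (α+1) + (1-x) ^ (α+1)) / (α+1)) ∂m01 = 2 / ((α+1)*(α+2)) := by
  rw [integral_div, intPhi hα]
  field_simp

lemma Bint (hα : 0 < α) :
    ∫ x, x ^ α * (1-x) ^ (α+1) ∂m01
      = Real.Gamma (α+1) * Real.Gamma (α+2) / Real.Gamma (2*α+3) := by
  have h := realBeta (a := α+1) (b := α+2) (by linarith) (by linarith)
  have e1 : α + 1 - 1 = α := by ring
  have e2 : α + 2 - 1 = α + 1 := by ring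
  have e3 : α + 1 + (α + 2) = 2*α+3 := by ring
  rw [e1, e2, e3] at h
  rw [show (∫ x, x ^ α * (1-x) ^ (α+1) ∂m01)
    = ∫ x in (0:ℝ)..1, x ^ α * (1-x) ^ (α+1) from
      (intervalIntegral.integral_of_le zero_le_one).symm, h]

lemma intxPhi (hα : 0 < α) :
    ∫ x, x ^ α * (x ^ (α+1) + (1-x) ^ (α+1)) ∂m01
      = 1/(2*α+2) + Real.Gamma (α+1) * Real.Gamma (α+2) / Real.Gamma (2*α+3) := by
  have hcong : ∀ x ∈ Ioc (0:ℝ) 1,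
      x ^ α * (x ^ (α+1) + (1-x) ^ (α+1))
        = x ^ (2*α+1) + x ^ α * (1-x) ^ (α+1) := by
    intro x hx
    rw [show x ^ (2*α+1) = x^α * x^(α+1) from by
        rw [show 2*α+1 = α+(α+1) by ring, Real.rpow_add hx.1], mul_add]
  rw [setIntegral_congr_fun measurableSet_Ioc hcong,
    integral_add (int_rpow_m (by linarith)) (int_mixed_m hα),
    int_rpow (by linarith), Bint hα]
  have : 2*α + 1 + 1 = 2*α+2 := by ring
  rw [this]

lemma V3 (hα : 0 < α) :
    ∫ x, x ^ α * ((x ^ (α+1) + (1-x) ^ (α+1)) / (α+1)) ∂m01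
      = (1/(2*α+2) + Real.Gamma (α+1) * Real.Gamma (α+2) / Real.Gamma (2*α+3)) / (α+1) := by
  have : (fun x : ℝ => x ^ α * ((x ^ (α+1) + (1-x) ^ (α+1)) / (α+1)))
      = fun x : ℝ => (x ^ α * (x ^ (α+1) + (1-x) ^ (α+1))) / (α+1) := by
    funext x; ring
  rw [this, integral_div, intxPhi hα]

end Values
lemma prod_expand {F Φ : ℝ → ℝ} (hF : Integrable F m01) (hΦ : Integrable Φ m01)
    (hFΦ : Integrable (fun x => F x * Φ x) m01) :
    ∫ p, (F p.1 - F p.2) * (Φ p.1 - Φ p.2) ∂(m01.prod m01)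
      = 2 * ((∫ x, F x * Φ x ∂m01) - (∫ x, F x ∂m01) * (∫ x, Φ x ∂m01)) := by
  have i1 : Integrable (fun p : ℝ×ℝ => F p.1 * Φ p.1) (m01.prod m01) := by
    simpa using hFΦ.mul_prod (integrable_const (1:ℝ))
  have i2 : Integrable (fun p : ℝ×ℝ => F p.1 * Φ p.2) (m01.prod m01) := by
    simpa using hF.mul_prod hΦ
  have i3 : Integrable (fun p : ℝ×ℝ => Φ p.1 * F p.2) (m01.prod m01) := by
    simpa using hΦ.mul_prod hF
  have i4 : Integrable (fun p : ℝ×ℝ => F p.2 * Φ p.2) (m01.prod m01) := by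
    simpa using (integrable_const (1:ℝ)).mul_prod hFΦ
  have key : (fun p : ℝ×ℝ => (F p.1 - F p.2) * (Φ p.1 - Φ p.2))
      = fun p : ℝ×ℝ => (F p.1 * Φ p.1 - F p.1 * Φ p.2) - (Φ p.1 * F p.2 - F p.2 * Φ p.2) := by
    funext p; ring
  have v1 : ∫ p : ℝ×ℝ, F p.1 * Φ p.1 ∂(m01.prod m01) = ∫ x, F x * Φ x ∂m01 := by
    simpa using integral_prod_mul (μ := m01) (ν := m01) (fun x => F x * Φ x) (fun _ => (1:ℝ))
  have v4 : ∫ p : ℝ×ℝ, F p.2 * Φ p.2 ∂(m01.prod m01) = ∫ x, F x * Φ x ∂m01 := by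
    simpa using integral_prod_mul (μ := m01) (ν := m01) (fun _ => (1:ℝ)) (fun x => F x * Φ x)
  have v2 : ∫ p : ℝ×ℝ, F p.1 * Φ p.2 ∂(m01.prod m01)
      = (∫ x, F x ∂m01) * (∫ x, Φ x ∂m01) := integral_prod_mul F Φ
  have v3 : ∫ p : ℝ×ℝ, Φ p.1 * F p.2 ∂(m01.prod m01)
      = (∫ x, F x ∂m01) * (∫ x, Φ x ∂m01) := by
    rw [integral_prod_mul Φ F]; ring
  have i12 : Integrable (fun p : ℝ×ℝ => F p.1 * Φ p.1 - F p.1 * Φ p.2) (m01.prod m01) := i1.sub i2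
  have i34 : Integrable (fun p : ℝ×ℝ => Φ p.1 * F p.2 - F p.2 * Φ p.2) (m01.prod m01) := i3.sub i4
  rw [key, integral_sub i12 i34, integral_sub i1 i2, integral_sub i3 i4,
    v1, v2, v3, v4]
  ring

lemma cov_expand {Ω : Type*} [MeasureSpace Ω] [IsProbabilityMeasure (ℙ : Measure Ω)]
    {f g : Ω → ℝ} (hf : Integrable f ℙ) (hg : Integrable g ℙ)
    (hfg : Integrable (fun ω => f ω * g ω) ℙ) :
    ∫ ω, (f ω - ∫ ω', f ω' ∂ℙ) * (g ω - ∫ ω', g ω' ∂ℙ) ∂ℙ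
      = (∫ ω, f ω * g ω ∂ℙ) - (∫ ω, f ω ∂ℙ) * (∫ ω, g ω ∂ℙ) := by
  set a := ∫ ω', f ω' ∂ℙ with ha
  set b := ∫ ω', g ω' ∂ℙ with hb
  have i2 : Integrable (fun ω => a * g ω) ℙ := hg.const_mul a
  have i3 : Integrable (fun ω => b * f ω) ℙ := hf.const_mul b
  have key : (fun ω => (f ω - a) * (g ω - b))
      = fun ω => (f ω * g ω - a * g ω) - (b * f ω - a * b) := by
    funext ω; ring
  have i5 : Integrable (fun _ : Ω => a * b) ℙ := integrable_const _
  have i12 : Integrable (fun ω => f ω * g ω - a * g ω) ℙ := hfg.sub i2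
  have i34 : Integrable (fun ω => b * f ω - a * b) ℙ := i3.sub i5
  rw [key, integral_sub i12 i34,
    integral_sub hfg i2, integral_sub i3 i5,
    integral_const_mul, integral_const_mul, integral_const]
  simp only [measure_univ, ENNReal.toReal_one, probReal_univ, one_smul, ← ha, ← hb]
  ring
section Prod
variable {α : ℝ}

lemma sq_ae : ∀ᵐ p ∂(m01.prod m01), p ∈ Ioc (0:ℝ) 1 ×ˢ Ioc (0:ℝ) 1 := by
  rw [show m01.prod m01 = (volume.prod volume).restrict (Ioc (0:ℝ) 1 ×ˢ Ioc (0:ℝ) 1) from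
    Measure.prod_restrict _ _]
  exact ae_restrict_mem (measurableSet_Ioc.prod measurableSet_Ioc)

lemma int_bdd2 {f : ℝ×ℝ → ℝ} (hm : AEStronglyMeasurable f (m01.prod m01)) {c : ℝ}
    (hb : ∀ p ∈ Ioc (0:ℝ) 1 ×ˢ Ioc (0:ℝ) 1, ‖f p‖ ≤ c) : Integrable f (m01.prod m01) :=
  Integrable.mono' (integrable_const c) hm
    (by filter_upwards [sq_ae] with p hp using hb p hp)

lemma rho_base_meas : Measurable (fun p : ℝ×ℝ => p.2 - if p.1 < p.2 then p.1 else 0) :=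
  measurable_snd.sub (Measurable.ite (measurableSet_lt measurable_fst measurable_snd)
    measurable_fst measurable_const)

lemma rho_meas (hα : 0 ≤ α) :
    Measurable (fun p : ℝ×ℝ => (p.2 - if p.1 < p.2 then p.1 else 0) ^ α) :=
  (rpow_meas hα).comp rho_base_meas

lemma rho_base_mem {p : ℝ×ℝ} (hp : p ∈ Ioc (0:ℝ) 1 ×ˢ Ioc (0:ℝ) 1) :
    0 ≤ p.2 - (if p.1 < p.2 then p.1 else 0) ∧ p.2 - (if p.1 < p.2 then p.1 else 0) ≤ 1 := by
  obtain ⟨⟨h1, h2⟩, ⟨h3, h4⟩⟩ := hp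
  by_cases h : p.1 < p.2 <;> simp [h] <;> constructor <;> linarith

lemma rho_bd1 (hα : 0 < α) {p : ℝ×ℝ} (hp : p ∈ Ioc (0:ℝ) 1 ×ˢ Ioc (0:ℝ) 1) :
    ‖(p.2 - if p.1 < p.2 then p.1 else 0) ^ α‖ ≤ 1 := by
  obtain ⟨hb0, hb1⟩ := rho_base_mem hp
  rw [Real.norm_eq_abs, abs_of_nonneg (Real.rpow_nonneg hb0 _)]
  exact Real.rpow_le_one hb0 hb1 hα.le

lemma int_rho (hα : 0 < α) :
    Integrable (fun p : ℝ×ℝ => (p.2 - if p.1 < p.2 then p.1 else 0) ^ α) (m01.prod m01) :=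
  int_bdd2 (rho_meas hα.le).aestronglyMeasurable (fun p hp => rho_bd1 hα hp)

lemma int_rhoP (hα : 0 < α) :
    Integrable (fun p : ℝ×ℝ => p.1 ^ α * (p.2 - if p.1 < p.2 then p.1 else 0) ^ α)
      (m01.prod m01) := by
  refine int_bdd2 (((rpow_meas hα.le).comp measurable_fst).mul
    (rho_meas hα.le)).aestronglyMeasurable (c := 1) (fun p hp => ?_)
  have h1 : ‖p.1 ^ α‖ ≤ 1 := rpow_bd1 hα hp.1
  have h2 := rho_bd1 hα hp
  calc ‖p.1 ^ α * (p.2 - if p.1 < p.2 then p.1 else 0) ^ α‖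
      ≤ ‖p.1 ^ α‖ * ‖(p.2 - if p.1 < p.2 then p.1 else 0) ^ α‖ := norm_mul_le _ _
  _ ≤ 1 := by nlinarith [norm_nonneg (p.1 ^ α), norm_nonneg ((p.2 - if p.1 < p.2 then p.1 else 0) ^ α)]

lemma A1 (hα : 0 < α) :
    ∫ p, (p.2 - if p.1 < p.2 then p.1 else 0) ^ α ∂(m01.prod m01)
      = ∫ x, ((x ^ (α+1) + (1-x) ^ (α+1)) / (α+1)) ∂m01 := by
  rw [integral_prod _ (int_rho hα)]
  exact setIntegral_congr_fun measurableSet_Ioc fun x hx => inner_int hα hx.1.le hx.2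

lemma A2 (hα : 0 < α) :
    ∫ p, p.1 ^ α * (p.2 - if p.1 < p.2 then p.1 else 0) ^ α ∂(m01.prod m01)
      = ∫ x, x ^ α * ((x ^ (α+1) + (1-x) ^ (α+1)) / (α+1)) ∂m01 := by
  rw [integral_prod _ (int_rhoP hα)]
  refine setIntegral_congr_fun measurableSet_Ioc fun x hx => ?_
  dsimp only
  rw [integral_const_mul, inner_int hα hx.1.le hx.2]
end Prod
section Sgn
variable {α : ℝ}

lemma W_meas (hβ : 0 ≤ α) : Measurable (fun x : ℝ => x ^ α + (1-x) ^ α) :=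
  (rpow_meas hβ).add (refl_meas hβ)

lemma W_int (hβ : 0 < α) : Integrable (fun x : ℝ => x ^ α + (1-x) ^ α) m01 :=
  (int_rpow_m hβ).add (int_refl_m hβ)

lemma W_bd2 (hβ : 0 < α) {x : ℝ} (hx : x ∈ Ioc (0:ℝ) 1) : ‖x ^ α + (1-x) ^ α‖ ≤ 2 := by
  have h1 := rpow_bd1 hβ hx
  have h2 := refl_bd1 hβ hx
  calc ‖x ^ α + (1-x) ^ α‖ ≤ ‖x ^ α‖ + ‖(1-x) ^ α‖ := norm_add_le _ _
  _ ≤ 2 := by linarith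

lemma WW_int (hα : 0 < α) :
    Integrable (fun x : ℝ => (x ^ α + (1-x) ^ α) * (x ^ (α+1) + (1-x) ^ (α+1))) m01 := by
  refine int_bdd ((W_meas hα.le).mul (W_meas (by linarith))).aestronglyMeasurable
    (c := 4) (fun x hx => ?_)
  have h1 := W_bd2 hα hx
  have h2 := W_bd2 (show (0:ℝ) < α+1 by linarith) hx
  calc ‖(x ^ α + (1-x) ^ α) * (x ^ (α+1) + (1-x) ^ (α+1))‖
      = ‖x ^ α + (1-x) ^ α‖ * ‖x ^ (α+1) + (1-x) ^ (α+1)‖ := norm_mul _ _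
  _ ≤ 4 := by nlinarith [norm_nonneg (x ^ α + (1-x) ^ α)]

lemma intF (hα : 0 < α) : ∫ x, (x ^ α + (1-x) ^ α) ∂m01 = 2/(α+1) := by
  rw [integral_add (int_rpow_m hα) (int_refl_m hα), refl_int (fun x => x ^ α), int_rpow hα]
  ring

lemma intFPhi (hα : 0 < α) :
    ∫ x, (x ^ α + (1-x) ^ α) * (x ^ (α+1) + (1-x) ^ (α+1)) ∂m01
      = 2 * ∫ x, x ^ α * (x ^ (α+1) + (1-x) ^ (α+1)) ∂m01 := by
  have expand : (fun x : ℝ => (x ^ α + (1-x) ^ α) * (x ^ (α+1) + (1-x) ^ (α+1)))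
      = fun x : ℝ => x ^ α * (x ^ (α+1) + (1-x) ^ (α+1))
          + (1-x) ^ α * (x ^ (α+1) + (1-x) ^ (α+1)) := by
    funext x; ring
  have i1 : Integrable (fun x : ℝ => x ^ α * (x ^ (α+1) + (1-x) ^ (α+1))) m01 := by
    refine int_bdd ((rpow_meas hα.le).mul (W_meas (by linarith))).aestronglyMeasurable
      (c := 2) (fun x hx => ?_)
    have h1 := rpow_bd1 hα hx
    have h2 := W_bd2 (show (0:ℝ) < α+1 by linarith) hx
    calc ‖x ^ α * (x ^ (α+1) + (1-x) ^ (α+1))‖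
        = ‖x ^ α‖ * ‖x ^ (α+1) + (1-x) ^ (α+1)‖ := norm_mul _ _
    _ ≤ 2 := by nlinarith [norm_nonneg (x ^ α), norm_nonneg (x ^ (α+1) + (1-x) ^ (α+1))]
  have i2 : Integrable (fun x : ℝ => (1-x) ^ α * (x ^ (α+1) + (1-x) ^ (α+1))) m01 := by
    refine int_bdd ((refl_meas hα.le).mul (W_meas (by linarith))).aestronglyMeasurable
      (c := 2) (fun x hx => ?_)
    have h1 := refl_bd1 hα hx
    have h2 := W_bd2 (show (0:ℝ) < α+1 by linarith) hx
    calc ‖(1-x) ^ α * (x ^ (α+1) + (1-x) ^ (α+1))‖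
        = ‖(1-x) ^ α‖ * ‖x ^ (α+1) + (1-x) ^ (α+1)‖ := norm_mul _ _
    _ ≤ 2 := by nlinarith [norm_nonneg ((1-x) ^ α), norm_nonneg (x ^ (α+1) + (1-x) ^ (α+1))]
  have refl2 : ∫ x, (1-x) ^ α * (x ^ (α+1) + (1-x) ^ (α+1)) ∂m01
      = ∫ x, x ^ α * (x ^ (α+1) + (1-x) ^ (α+1)) ∂m01 := by
    have : (fun x : ℝ => (1-x) ^ α * (x ^ (α+1) + (1-x) ^ (α+1)))
        = fun x : ℝ => (fun t : ℝ => t ^ α * (t ^ (α+1) + (1-t) ^ (α+1))) (1-x) := by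
      funext x
      simp only
      rw [show (1:ℝ) - (1-x) = x by ring]
      ring
    rw [this, refl_int (fun t : ℝ => t ^ α * (t ^ (α+1) + (1-t) ^ (α+1)))]
  rw [expand, integral_add i1 i2, refl2]
  ring

lemma S_int (hα : 0 < α) :
    Integrable (fun p : ℝ×ℝ => ((p.1 ^ α + (1-p.1) ^ α) - (p.2 ^ α + (1-p.2) ^ α))
      * ((p.1 ^ (α+1) + (1-p.1) ^ (α+1)) - (p.2 ^ (α+1) + (1-p.2) ^ (α+1))))
      (m01.prod m01) := by
  have hm : Measurable (fun p : ℝ×ℝ => ((p.1 ^ α + (1-p.1) ^ α) - (p.2 ^ α + (1-p.2) ^ α))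
      * ((p.1 ^ (α+1) + (1-p.1) ^ (α+1)) - (p.2 ^ (α+1) + (1-p.2) ^ (α+1)))) :=
    (((W_meas hα.le).comp measurable_fst).sub ((W_meas hα.le).comp measurable_snd)).mul
      (((W_meas (by linarith : (0:ℝ) ≤ α+1)).comp measurable_fst).sub
        ((W_meas (by linarith : (0:ℝ) ≤ α+1)).comp measurable_snd))
  refine int_bdd2 hm.aestronglyMeasurable (c := 16) (fun p hp => ?_)
  have h1 := W_bd2 hα hp.1
  have h2 := W_bd2 hα hp.2
  have h3 := W_bd2 (show (0:ℝ) < α+1 by linarith) hp.1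
  have h4 := W_bd2 (show (0:ℝ) < α+1 by linarith) hp.2
  have n1 : ‖(p.1 ^ α + (1-p.1) ^ α) - (p.2 ^ α + (1-p.2) ^ α)‖ ≤ 4 := by
    calc ‖_ - _‖ ≤ ‖p.1 ^ α + (1-p.1) ^ α‖ + ‖p.2 ^ α + (1-p.2) ^ α‖ := norm_sub_le _ _
    _ ≤ 4 := by linarith
  have n2 : ‖(p.1 ^ (α+1) + (1-p.1) ^ (α+1)) - (p.2 ^ (α+1) + (1-p.2) ^ (α+1))‖ ≤ 4 := by
    calc ‖_ - _‖ ≤ _ + _ := norm_sub_le _ _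
    _ ≤ 4 := by linarith
  calc ‖_ * _‖ = ‖(p.1 ^ α + (1-p.1) ^ α) - (p.2 ^ α + (1-p.2) ^ α)‖
        * ‖(p.1 ^ (α+1) + (1-p.1) ^ (α+1)) - (p.2 ^ (α+1) + (1-p.2) ^ (α+1))‖ := norm_mul _ _
  _ ≤ 16 := by nlinarith [norm_nonneg ((p.1 ^ α + (1-p.1) ^ α) - (p.2 ^ α + (1-p.2) ^ α))]

lemma S_eq (hα : 0 < α) :
    ∫ p, ((p.1 ^ α + (1-p.1) ^ α) - (p.2 ^ α + (1-p.2) ^ α))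
      * ((p.1 ^ (α+1) + (1-p.1) ^ (α+1)) - (p.2 ^ (α+1) + (1-p.2) ^ (α+1))) ∂(m01.prod m01)
    = 4 * (∫ x, x ^ α * (x ^ (α+1) + (1-x) ^ (α+1)) ∂m01) - 8 / ((α+1)*(α+2)) := by
  rw [prod_expand (W_int hα) (W_int (by linarith : (0:ℝ) < α+1)) (WW_int hα),
    intFPhi hα, intF hα, intPhi hα]
  field_simp
  ring
end Sgn
section Sgn2
variable {α : ℝ}

lemma rect_pos : 0 < (m01.prod m01) (Ioc (1/2:ℝ) (5/8) ×ˢ Ioc (3/4:ℝ) (7/8)) := by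
  rw [Measure.prod_prod, Measure.restrict_apply measurableSet_Ioc,
    Measure.restrict_apply measurableSet_Ioc]
  rw [Ioc_inter_Ioc, Ioc_inter_Ioc, Real.volume_Ioc, Real.volume_Ioc]
  refine ENNReal.mul_pos (ne_of_gt ?_) (ne_of_gt ?_) <;> rw [ENNReal.ofReal_pos] <;>
    rw [sup_eq_left.2 (by norm_num), inf_eq_left.2 (by norm_num)] <;> norm_num
end Sgn2

section Sgn3
variable {α : ℝ}

lemma S_pos (hα : 1 < α) :
    0 < ∫ p, ((p.1 ^ α + (1-p.1) ^ α) - (p.2 ^ α + (1-p.2) ^ α))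
      * ((p.1 ^ (α+1) + (1-p.1) ^ (α+1)) - (p.2 ^ (α+1) + (1-p.2) ^ (α+1)))
      ∂(m01.prod m01) := by
  have hα0 : (0:ℝ) < α := by linarith
  have hae : 0 ≤ᵐ[m01.prod m01] fun p : ℝ×ℝ =>
      ((p.1 ^ α + (1-p.1) ^ α) - (p.2 ^ α + (1-p.2) ^ α))
        * ((p.1 ^ (α+1) + (1-p.1) ^ (α+1)) - (p.2 ^ (α+1) + (1-p.2) ^ (α+1))) := by
    filter_upwards [sq_ae] with p hp
    exact key_nonneg hα ⟨hp.1.1.le, hp.1.2⟩ ⟨hp.2.1.le, hp.2.2⟩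
  rw [integral_pos_iff_support_of_nonneg_ae hae (S_int hα0)]
  refine lt_of_lt_of_le rect_pos (measure_mono fun p hp => ?_)
  exact (key_pos hα hp.1 hp.2).ne'

lemma S_neg (hα0 : 0 < α) (hα : α < 1) :
    (∫ p, ((p.1 ^ α + (1-p.1) ^ α) - (p.2 ^ α + (1-p.2) ^ α))
      * ((p.1 ^ (α+1) + (1-p.1) ^ (α+1)) - (p.2 ^ (α+1) + (1-p.2) ^ (α+1)))
      ∂(m01.prod m01)) < 0 := by
  have hneg : 0 < ∫ p, -(((p.1 ^ α + (1-p.1) ^ α) - (p.2 ^ α + (1-p.2) ^ α))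
      * ((p.1 ^ (α+1) + (1-p.1) ^ (α+1)) - (p.2 ^ (α+1) + (1-p.2) ^ (α+1))))
      ∂(m01.prod m01) := by
    have hae : 0 ≤ᵐ[m01.prod m01] fun p : ℝ×ℝ =>
        -(((p.1 ^ α + (1-p.1) ^ α) - (p.2 ^ α + (1-p.2) ^ α))
          * ((p.1 ^ (α+1) + (1-p.1) ^ (α+1)) - (p.2 ^ (α+1) + (1-p.2) ^ (α+1)))) := by
      filter_upwards [sq_ae] with p hp
      exact neg_nonneg.mpr <| key_nonpos hα0 hα ⟨hp.1.1.le, hp.1.2⟩ ⟨hp.2.1.le, hp.2.2⟩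
    rw [integral_pos_iff_support_of_nonneg_ae hae (S_int hα0).neg]
    refine lt_of_lt_of_le rect_pos (measure_mono fun p hp => ?_)
    exact neg_ne_zero.mpr (key_neg hα0 hα hp.1 hp.2).ne
  rw [integral_neg] at hneg
  linarith

lemma S_zero :
    (∫ p, ((p.1 ^ (1:ℝ) + (1-p.1) ^ (1:ℝ)) - (p.2 ^ (1:ℝ) + (1-p.2) ^ (1:ℝ)))
      * ((p.1 ^ ((1:ℝ)+1) + (1-p.1) ^ ((1:ℝ)+1)) - (p.2 ^ ((1:ℝ)+1) + (1-p.2) ^ ((1:ℝ)+1)))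
      ∂(m01.prod m01)) = 0 := by
  have : (fun p : ℝ×ℝ => ((p.1 ^ (1:ℝ) + (1-p.1) ^ (1:ℝ)) - (p.2 ^ (1:ℝ) + (1-p.2) ^ (1:ℝ)))
      * ((p.1 ^ ((1:ℝ)+1) + (1-p.1) ^ ((1:ℝ)+1)) - (p.2 ^ ((1:ℝ)+1) + (1-p.2) ^ ((1:ℝ)+1))))
      = fun _ => 0 := by
    funext p
    simp [Real.rpow_one]
  rw [this, integral_zero]
end Sgn3
theorem stmt10 {Ω : Type*} [MeasureSpace Ω] [IsProbabilityMeasure (ℙ : Measure Ω)]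
    (X : ℕ → Ω → ℝ)
    (hX0 : ∀ ω, X 0 ω = 0)
    (hXmeas : ∀ i, Measurable (X i))
    (hXindep : iIndepFun (fun i : ℕ => X (i + 1)) ℙ)
    (hXunif : ∀ i : ℕ, Measure.map (X (i + 1)) ℙ
      = (volume : Measure ℝ).restrict (Set.Ioc 0 1))
    (Z : ℕ → Ω → ℝ)
    (hZ : ∀ k ω, Z k ω = X k ω - sSup {y : ℝ | ∃ j < k, X j ω = y ∧ y < X k ω})
    (α : ℝ) (hα : 0 < α)
    (C : ℝ)
    (hC : C = ∫ ω, (Z 1 ω ^ α - ∫ ω', Z 1 ω' ^ α ∂ℙ)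
        * (Z 2 ω ^ α - ∫ ω', Z 2 ω' ^ α ∂ℙ) ∂ℙ) :
    C = ((α - 2) * Real.Gamma (2 * α + 3) + 2 * (α + 2) * Real.Gamma (α + 2) ^ 2)
        / (2 * (α + 1) ^ 2 * (α + 2) * Real.Gamma (2 * α + 3)) ∧
      (C = 0 ↔ α = 1) ∧ (1 < α → 0 < C) ∧ (α < 1 → C < 0) := by
  have hα1 : (0:ℝ) < α + 1 := by linarith
  have hGa1 : 0 < Real.Gamma (α+1) := Real.Gamma_pos_of_pos (by linarith)
  have hGa : 0 < Real.Gamma (α+2) := Real.Gamma_pos_of_pos (by linarith)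
  have hG2 : 0 < Real.Gamma (2*α+3) := Real.Gamma_pos_of_pos (by linarith)
  -- Z 1 = X 1
  have hZ1 : ∀ ω, Z 1 ω = X 1 ω := by
    intro ω
    rw [hZ]
    have hset : {y : ℝ | ∃ j < 1, X j ω = y ∧ y < X 1 ω}
        = {y : ℝ | 0 = y ∧ y < X 1 ω} := by
      ext y
      simp only [mem_setOf_eq]
      constructor
      · rintro ⟨j, hj, hxy, hlt⟩
        have hj0 : j = 0 := Nat.lt_one_iff.1 hj
        subst hj0
        rw [hX0] at hxy
        exact ⟨hxy, hlt⟩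
      · rintro ⟨h0, hlt⟩
        exact ⟨0, Nat.zero_lt_one, by rw [hX0]; exact h0, hlt⟩
    rw [hset]
    rcases lt_or_ge 0 (X 1 ω) with h|h
    · rw [show {y : ℝ | 0 = y ∧ y < X 1 ω} = {0} from by
        ext y
        simp only [mem_setOf_eq, mem_singleton_iff]
        exact ⟨fun ⟨h1,_⟩ => h1.symm, fun h1 => ⟨h1.symm, by rw [h1]; exact h⟩⟩]
      rw [csSup_singleton, sub_zero]
    · rw [show {y : ℝ | 0 = y ∧ y < X 1 ω} = ∅ from by
        ext y
        simp only [mem_setOf_eq, mem_empty_iff_false, iff_false, not_and]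
        rintro rfl
        intro hlt
        linarith]
      rw [Real.sSup_empty, sub_zero]
  -- Z 2 on the good set
  have hZ2pt : ∀ ω, X 1 ω ∈ Ioc (0:ℝ) 1 → X 2 ω ∈ Ioc (0:ℝ) 1 →
      Z 2 ω = X 2 ω - (if X 1 ω < X 2 ω then X 1 ω else 0) := by
    intro ω h1 h2
    rw [hZ]
    have hset : {y : ℝ | ∃ j < 2, X j ω = y ∧ y < X 2 ω}
        = {y : ℝ | (0 = y ∧ y < X 2 ω) ∨ (X 1 ω = y ∧ y < X 2 ω)} := by
      ext y
      simp only [mem_setOf_eq]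
      constructor
      · rintro ⟨j, hj, hxy, hlt⟩
        interval_cases j
        · left; rw [hX0] at hxy; exact ⟨hxy, hlt⟩
        · right; exact ⟨hxy, hlt⟩
      · rintro (⟨h0, hlt⟩|⟨h0, hlt⟩)
        · exact ⟨0, by norm_num, by rw [hX0]; exact h0, hlt⟩
        · exact ⟨1, by norm_num, h0, hlt⟩
    rw [hset]
    by_cases hlt : X 1 ω < X 2 ω
    · rw [if_pos hlt]
      rw [show {y : ℝ | (0 = y ∧ y < X 2 ω) ∨ (X 1 ω = y ∧ y < X 2 ω)} = {0, X 1 ω} from by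
        ext y
        simp only [mem_setOf_eq, mem_insert_iff, mem_singleton_iff]
        constructor
        · rintro (⟨h0, _⟩|⟨h0, _⟩)
          · exact Or.inl h0.symm
          · exact Or.inr h0.symm
        · rintro (rfl|rfl)
          · exact Or.inl ⟨rfl, lt_trans h1.1 hlt⟩
          · exact Or.inr ⟨rfl, hlt⟩]
      rw [csSup_pair, sup_eq_right.2 h1.1.le]
    · rw [if_neg hlt]
      rw [show {y : ℝ | (0 = y ∧ y < X 2 ω) ∨ (X 1 ω = y ∧ y < X 2 ω)} = {0} from by
        ext y
        simp only [mem_setOf_eq, mem_singleton_iff]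
        constructor
        · rintro (⟨h0, _⟩|⟨h0, hlt2⟩)
          · exact h0.symm
          · exact absurd (h0 ▸ hlt2) hlt
        · rintro rfl
          exact Or.inl ⟨rfl, h2.1⟩]
      rw [csSup_singleton, sub_zero]
  -- a.e. facts
  have haeIoc : ∀ i : ℕ, ∀ᵐ ω ∂ℙ, X (i+1) ω ∈ Ioc (0:ℝ) 1 := by
    intro i
    have hpre : ℙ ((X (i+1)) ⁻¹' (Ioc 0 1)) = 1 := by
      rw [← Measure.map_apply (hXmeas _) measurableSet_Ioc, hXunif i,
        Measure.restrict_apply measurableSet_Ioc, inter_self, Real.volume_Ioc]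
      norm_num
    rw [ae_iff]
    have hcset : {ω | ¬ X (i+1) ω ∈ Ioc (0:ℝ) 1} = ((X (i+1)) ⁻¹' (Ioc 0 1))ᶜ := rfl
    rw [hcset, measure_compl ((hXmeas _) measurableSet_Ioc) (measure_ne_top _ _), hpre,
      measure_univ, tsub_self]
  have hae1 : ∀ᵐ ω ∂ℙ, X 1 ω ∈ Ioc (0:ℝ) 1 := by simpa using haeIoc 0
  have hae2 : ∀ᵐ ω ∂ℙ, X 2 ω ∈ Ioc (0:ℝ) 1 := by simpa using haeIoc 1
  have hmap1 : Measure.map (X 1) ℙ = m01 := by simpa using hXunif 0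
  have hmap2 : Measure.map (X 2) ℙ = m01 := by simpa using hXunif 1
  have hpm : Measurable (fun ω => (X 1 ω, X 2 ω)) := (hXmeas 1).prodMk (hXmeas 2)
  have hjoint : Measure.map (fun ω => (X 1 ω, X 2 ω)) ℙ = m01.prod m01 := by
    have hi : IndepFun (X 1) (X 2) ℙ := hXindep.indepFun (show (0:ℕ) ≠ 1 by decide)
    rw [(indepFun_iff_map_prod_eq_prod_map_map (hXmeas 1).aemeasurable
      (hXmeas 2).aemeasurable).1 hi, hmap1, hmap2]
  -- expectations
  have hE1 : ∫ ω, Z 1 ω ^ α ∂ℙ = 1/(α+1) := by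
    have e := integral_map (μ := ℙ) (φ := X 1) (f := fun x : ℝ => x ^ α)
      (hXmeas 1).aemeasurable ((rpow_meas hα.le).aestronglyMeasurable)
    rw [hmap1, V1 hα] at e
    rw [show (fun ω => Z 1 ω ^ α) = fun ω => (X 1 ω) ^ α from funext fun ω => by rw [hZ1 ω]]
    exact e.symm
  have hE2 : ∫ ω, Z 2 ω ^ α ∂ℙ = 2/((α+1)*(α+2)) := by
    have hcong : ∀ᵐ ω ∂ℙ, Z 2 ω ^ α
        = (fun p : ℝ×ℝ => (p.2 - if p.1 < p.2 then p.1 else 0) ^ α) (X 1 ω, X 2 ω) := by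
      filter_upwards [hae1, hae2] with ω h1 h2
      rw [hZ2pt ω h1 h2]
    rw [integral_congr_ae hcong]
    have e := integral_map (μ := ℙ) (φ := fun ω => (X 1 ω, X 2 ω))
      (f := fun p : ℝ×ℝ => (p.2 - if p.1 < p.2 then p.1 else 0) ^ α)
      hpm.aemeasurable ((rho_meas hα.le).aestronglyMeasurable)
    rw [hjoint, A1 hα, V2 hα] at e
    exact e.symm
  have hE12 : ∫ ω, Z 1 ω ^ α * Z 2 ω ^ α ∂ℙ
      = (1/(2*α+2) + Real.Gamma (α+1) * Real.Gamma (α+2) / Real.Gamma (2*α+3)) / (α+1) := by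
    have hcong : ∀ᵐ ω ∂ℙ, Z 1 ω ^ α * Z 2 ω ^ α
        = (fun p : ℝ×ℝ => p.1 ^ α * (p.2 - if p.1 < p.2 then p.1 else 0) ^ α) (X 1 ω, X 2 ω) := by
      filter_upwards [hae1, hae2] with ω h1 h2
      rw [hZ1 ω, hZ2pt ω h1 h2]
    rw [integral_congr_ae hcong]
    have e := integral_map (μ := ℙ) (φ := fun ω => (X 1 ω, X 2 ω))
      (f := fun p : ℝ×ℝ => p.1 ^ α * (p.2 - if p.1 < p.2 then p.1 else 0) ^ α)
      hpm.aemeasurable (((rpow_meas hα.le).comp measurable_fst).mul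
        (rho_meas hα.le)).aestronglyMeasurable
    rw [hjoint, A2 hα, V3 hα] at e
    exact e.symm
  -- integrability
  have iZ1 : Integrable (fun ω => Z 1 ω ^ α) ℙ := by
    have h := (integrable_map_measure ((rpow_meas hα.le).aestronglyMeasurable)
      (hXmeas 1).aemeasurable).1 (by rw [hmap1]; exact int_rpow_m hα)
    exact h.congr (ae_of_all _ fun ω => by simp only [Function.comp_apply]; rw [hZ1 ω])
  have iZ2 : Integrable (fun ω => Z 2 ω ^ α) ℙ := by
    have h := (integrable_map_measure ((rho_meas hα.le).aestronglyMeasurable)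
      hpm.aemeasurable).1 (by rw [hjoint]; exact int_rho hα)
    refine h.congr ?_
    filter_upwards [hae1, hae2] with ω h1 h2
    simp only [Function.comp_apply]
    rw [hZ2pt ω h1 h2]
  have iZ12 : Integrable (fun ω => Z 1 ω ^ α * Z 2 ω ^ α) ℙ := by
    have h := (integrable_map_measure ((((rpow_meas hα.le).comp measurable_fst).mul
      (rho_meas hα.le)).aestronglyMeasurable)
      hpm.aemeasurable).1 (by rw [hjoint]; exact int_rhoP hα)
    refine h.congr ?_
    filter_upwards [hae1, hae2] with ω h1 h2
    simp only [Function.comp_apply, Pi.mul_apply]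
    rw [hZ1 ω, hZ2pt ω h1 h2]
  -- covariance value
  have hCv : C = (1/(2*α+2) + Real.Gamma (α+1) * Real.Gamma (α+2) / Real.Gamma (2*α+3)) / (α+1)
      - (1/(α+1)) * (2/((α+1)*(α+2))) := by
    rw [hC, cov_expand iZ1 iZ2 iZ12, hE12, hE1, hE2]
  -- sign via the double integral
  have hSS : (∫ p, ((p.1 ^ α + (1-p.1) ^ α) - (p.2 ^ α + (1-p.2) ^ α))
      * ((p.1 ^ (α+1) + (1-p.1) ^ (α+1)) - (p.2 ^ (α+1) + (1-p.2) ^ (α+1)))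
      ∂(m01.prod m01)) = 4*(α+1)*C := by
    rw [S_eq hα, intxPhi hα, hCv]
    field_simp
    ring
  have hpos : 1 < α → 0 < C := by
    intro h
    have hs := S_pos h
    rw [hSS] at hs
    nlinarith
  have hneg : α < 1 → C < 0 := by
    intro h
    have hs := S_neg hα h
    rw [hSS] at hs
    nlinarith
  have hzero : α = 1 → C = 0 := by
    intro h
    subst h
    have hs := S_zero
    rw [hSS] at hs
    linarith
  refine ⟨?_, ⟨fun hC0 => ?_, hzero⟩, hpos, hneg⟩
  · rw [hCv, show Real.Gamma (α+2) = (α+1) * Real.Gamma (α+1) from by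
      rw [show α+2 = (α+1)+1 by ring, Real.Gamma_add_one (by positivity)]]
    field_simp
    ring
  · by_contra hne
    rcases lt_or_gt_of_ne hne with h|h
    · exact absurd hC0 (ne_of_lt (hneg h))
    · exact absurd hC0 (ne_of_gt (hpos h))
end

section
/- Let α > 1 and let D̃_α be the unique mean-zero square-integrable solution of the fixed-point equation D̃_α =_d U^α D̃_α^{(1)} + (1-U)^α D̃_α^{(2)} + (α/(α-1))U^α + (1/(α-1))(1-U)^α - 1/(α-1), with U uniform on (0,1) independent of the independent copies D̃_α^{(1)}, D̃_α^{(2)}. Then Var[D̃_α] = α(α - 2 + 2(2α+1)J(α)) / ((α-1)²(2α-1)), where J(α) = ∫_0^1 u^α(1-u)^α du. -/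
open MeasureTheory ProbabilityTheory Real Set

lemma aux_cont_rpow (α : ℝ) (hα0 : 0 < α) : Continuous (fun u : ℝ => u ^ α) :=
  Real.continuous_rpow_const hα0.le

lemma aux_int_rpow (α : ℝ) (hα0 : 0 < α) : ∫ u in (0:ℝ)..1, u ^ α = 1/(α+1) := by
  rw [integral_rpow (Or.inl (by linarith))]
  rw [Real.one_rpow, Real.zero_rpow (by linarith)]
  ring

lemma aux_int_rpow_sq (α : ℝ) (hα0 : 0 < α) :
    ∫ u in (0:ℝ)..1, (u ^ α) ^ 2 = 1/(2*α+1) := by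
  have key : EqOn (fun u : ℝ => (u ^ α) ^ 2) (fun u => u ^ (2*α)) (uIcc (0:ℝ) 1) := by
    intro u hu
    rw [Set.uIcc_of_le (by norm_num)] at hu
    simp only
    rw [← Real.rpow_natCast (u ^ α) 2, ← Real.rpow_mul hu.1]
    norm_num [mul_comm]
  rw [intervalIntegral.integral_congr key, integral_rpow (Or.inl (by linarith))]
  rw [Real.one_rpow, Real.zero_rpow (by linarith)]
  ring

lemma aux_refl (f : ℝ → ℝ) : ∫ u in (0:ℝ)..1, f (1 - u) = ∫ u in (0:ℝ)..1, f u := by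
  simpa using intervalIntegral.integral_comp_sub_left (a := (0:ℝ)) (b := 1) f 1

lemma aux_S (α A B : ℝ) (hα0 : 0 < α) :
    ∫ u in (0:ℝ)..1, (A * u^α + B * (1-u)^α - B)^2
      = A^2 * (1/(2*α+1)) + B^2 * (1/(2*α+1)) + B^2
        + 2*A*B*(∫ u in (0:ℝ)..1, u^α * (1-u)^α)
        - 2*A*B*(1/(α+1)) - 2*B^2*(1/(α+1)) := by
  have cf : Continuous (fun u : ℝ => u ^ α) := aux_cont_rpow α hα0
  have cg : Continuous (fun u : ℝ => (1-u) ^ α) :=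
    cf.comp (continuous_const.sub continuous_id)
  have i1 : IntervalIntegrable (fun u : ℝ => A^2 * (u^α)^2) volume 0 1 :=
    (continuous_const.mul (cf.pow 2)).intervalIntegrable 0 1
  have i2 : IntervalIntegrable (fun u : ℝ => B^2 * ((1-u)^α)^2) volume 0 1 :=
    (continuous_const.mul (cg.pow 2)).intervalIntegrable 0 1
  have i3 : IntervalIntegrable (fun _ : ℝ => B^2) volume 0 1 :=
    intervalIntegrable_const
  have i4 : IntervalIntegrable (fun u : ℝ => 2*A*B * (u^α * (1-u)^α)) volume 0 1 :=
    (continuous_const.mul (cf.mul cg)).intervalIntegrable 0 1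
  have i5 : IntervalIntegrable (fun u : ℝ => 2*A*B * u^α) volume 0 1 :=
    (continuous_const.mul cf).intervalIntegrable 0 1
  have i6 : IntervalIntegrable (fun u : ℝ => 2*B^2 * (1-u)^α) volume 0 1 :=
    (continuous_const.mul cg).intervalIntegrable 0 1
  rw [show (fun u : ℝ => (A * u^α + B * (1-u)^α - B)^2)
      = fun u : ℝ => (A^2 * (u^α)^2 + B^2 * ((1-u)^α)^2 + B^2
          + 2*A*B * (u^α * (1-u)^α)) - (2*A*B * u^α + 2*B^2 * (1-u)^α)
    from funext fun u => by ring]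
  rw [intervalIntegral.integral_sub (((i1.add i2).add i3).add i4) (i5.add i6),
    intervalIntegral.integral_add ((i1.add i2).add i3) i4,
    intervalIntegral.integral_add (i1.add i2) i3,
    intervalIntegral.integral_add i1 i2,
    intervalIntegral.integral_add i5 i6,
    intervalIntegral.integral_const_mul, intervalIntegral.integral_const_mul,
    intervalIntegral.integral_const_mul, intervalIntegral.integral_const_mul,
    intervalIntegral.integral_const_mul]
  have e1 : ∫ u in (0:ℝ)..1, (u^α)^2 = 1/(2*α+1) := aux_int_rpow_sq α hα0
  have e2 : ∫ u in (0:ℝ)..1, ((1-u)^α)^2 = 1/(2*α+1) := by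
    rw [aux_refl (fun u => (u^α)^2)]; exact e1
  have e3 : ∫ u in (0:ℝ)..1, u^α = 1/(α+1) := aux_int_rpow α hα0
  have e4 : ∫ u in (0:ℝ)..1, (1-u)^α = 1/(α+1) := by
    rw [aux_refl (fun u => u^α)]; exact e3
  rw [e1, e2, e3, e4, intervalIntegral.integral_const]
  simp only [smul_eq_mul, sub_zero]
  ring

set_option maxHeartbeats 1000000 in
theorem stmt14 {Ω : Type*} [MeasureSpace Ω] [IsProbabilityMeasure (ℙ : Measure Ω)]
    (α : ℝ) (hα : 1 < α)
    (U D D1 D2 : Ω → ℝ)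
    (hUmeas : Measurable U) (hDmeas : Measurable D)
    (hD1meas : Measurable D1) (hD2meas : Measurable D2)
    (hU : Measure.map U ℙ = (volume : Measure ℝ).restrict (Set.Ioo 0 1))
    (hcopy1 : Measure.map D1 ℙ = Measure.map D ℙ)
    (hcopy2 : Measure.map D2 ℙ = Measure.map D ℙ)
    (hindep : iIndepFun ![U, D1, D2] ℙ)
    (hL2 : MemLp D 2 ℙ)
    (hmean : (∫ ω, D ω ∂ℙ) = 0)
    (hfix : Measure.map D ℙ = Measure.map (fun ω =>
        U ω ^ α * D1 ω + (1 - U ω) ^ α * D2 ω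
          + (α / (α - 1)) * U ω ^ α + (1 / (α - 1)) * (1 - U ω) ^ α
          - 1 / (α - 1)) ℙ) :
    variance D ℙ
      = α * (α - 2 + 2 * (2 * α + 1) * ∫ u in (0 : ℝ)..1, u ^ α * (1 - u) ^ α)
        / ((α - 1) ^ 2 * (2 * α - 1)) := by
  have hα0 : (0:ℝ) < α := by linarith
  set A : ℝ := α / (α - 1) with hA
  set B : ℝ := 1 / (α - 1) with hB
  have hA0 : 0 < A := by rw [hA]; exact div_pos hα0 (by linarith)
  have hB0 : 0 < B := by rw [hB]; exact div_pos one_pos (by linarith)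
  set J : ℝ := ∫ u in (0:ℝ)..1, u ^ α * (1 - u) ^ α with hJ
  -- measurability
  have hmeasvec : ∀ i, Measurable (![U, D1, D2] i) := by
    intro i; fin_cases i <;> simpa
  have msq : Measurable (fun x : ℝ => x ^ 2) := measurable_id.pow_const 2
  -- independence
  have hind12 : IndepFun D1 D2 ℙ := by
    simpa using hindep.indepFun (show (1:Fin 3) ≠ 2 by decide)
  have hindU1 : IndepFun U D1 ℙ := by
    simpa using hindep.indepFun (show (0:Fin 3) ≠ 1 by decide)
  have hindU2 : IndepFun U D2 ℙ := by
    simpa using hindep.indepFun (show (0:Fin 3) ≠ 2 by decide)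
  have hpair : IndepFun U (fun ω => (D1 ω, D2 ω)) ℙ := by
    have := hindep.indepFun_prodMk hmeasvec 1 2 0 (by decide) (by decide)
    simpa using this.symm
  -- a.e. U in Ioo 0 1
  have hUae : ∀ᵐ ω ∂ℙ, U ω ∈ Ioo (0:ℝ) 1 := by
    have h0 : ℙ (U ⁻¹' (Ioo (0:ℝ) 1)ᶜ) = 0 := by
      rw [← Measure.map_apply hUmeas measurableSet_Ioo.compl, hU,
        Measure.restrict_apply measurableSet_Ioo.compl]
      simp
    exact ae_iff.mpr h0
  -- integral of a function of U
  have hUval : ∀ (φ : ℝ → ℝ), Measurable φ → ∫ ω, φ (U ω) ∂ℙ = ∫ u in (0:ℝ)..1, φ u := by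
    intro φ hφ
    rw [← integral_map hUmeas.aemeasurable hφ.aestronglyMeasurable, hU,
      intervalIntegral.integral_of_le zero_le_one, integral_Ioc_eq_integral_Ioo]
  have hUint : ∀ (φ : ℝ → ℝ) (C : ℝ), Measurable φ → (∀ u ∈ Ioo (0:ℝ) 1, ‖φ u‖ ≤ C) →
      Integrable (fun ω => φ (U ω)) ℙ := by
    intro φ C hφ hC
    refine Integrable.mono' (integrable_const C) (hφ.comp hUmeas).aestronglyMeasurable ?_
    filter_upwards [hUae] with ω hω using hC _ hω
  -- integrability of D's
  have hD_int : Integrable D ℙ := hL2.integrable one_le_two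
  have hDsq_int : Integrable (fun ω => D ω ^ 2) ℙ := hL2.integrable_sq
  have hmap_sq : Integrable (fun x : ℝ => x ^ 2) (Measure.map D ℙ) :=
    (integrable_map_measure msq.aestronglyMeasurable hDmeas.aemeasurable).mpr hDsq_int
  have hmap_id : Integrable (fun x : ℝ => x) (Measure.map D ℙ) :=
    (integrable_map_measure aestronglyMeasurable_id hDmeas.aemeasurable).mpr hD_int
  have hD1sq_int : Integrable (fun ω => D1 ω ^ 2) ℙ :=
    (integrable_map_measure msq.aestronglyMeasurable hD1meas.aemeasurable).mp
      (hcopy1 ▸ hmap_sq)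
  have hD2sq_int : Integrable (fun ω => D2 ω ^ 2) ℙ :=
    (integrable_map_measure msq.aestronglyMeasurable hD2meas.aemeasurable).mp
      (hcopy2 ▸ hmap_sq)
  have hD1_int : Integrable D1 ℙ :=
    (integrable_map_measure aestronglyMeasurable_id hD1meas.aemeasurable).mp
      (hcopy1 ▸ hmap_id)
  have hD2_int : Integrable D2 ℙ :=
    (integrable_map_measure aestronglyMeasurable_id hD2meas.aemeasurable).mp
      (hcopy2 ▸ hmap_id)
  -- moments of copies
  have hmapD : ∫ x, x ∂(Measure.map D ℙ) = ∫ ω, D ω ∂ℙ :=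
    integral_map hDmeas.aemeasurable measurable_id.aestronglyMeasurable
  have hED1 : ∫ ω, D1 ω ∂ℙ = 0 := by
    have h1 : ∫ x, x ∂(Measure.map D1 ℙ) = ∫ ω, D1 ω ∂ℙ :=
      integral_map hD1meas.aemeasurable measurable_id.aestronglyMeasurable
    rw [← h1, hcopy1, hmapD]; exact hmean
  have hED2 : ∫ ω, D2 ω ∂ℙ = 0 := by
    have h1 : ∫ x, x ∂(Measure.map D2 ℙ) = ∫ ω, D2 ω ∂ℙ :=
      integral_map hD2meas.aemeasurable measurable_id.aestronglyMeasurable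
    rw [← h1, hcopy2, hmapD]; exact hmean
  have hED1sq : ∫ ω, D1 ω ^ 2 ∂ℙ = ∫ ω, D ω ^ 2 ∂ℙ := by
    rw [← integral_map hD1meas.aemeasurable msq.aestronglyMeasurable, hcopy1,
      integral_map hDmeas.aemeasurable msq.aestronglyMeasurable]
  have hED2sq : ∫ ω, D2 ω ^ 2 ∂ℙ = ∫ ω, D ω ^ 2 ∂ℙ := by
    rw [← integral_map hD2meas.aemeasurable msq.aestronglyMeasurable, hcopy2,
      integral_map hDmeas.aemeasurable msq.aestronglyMeasurable]
  -- the six ℝ → ℝ functions of u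
  have cf : Continuous (fun u : ℝ => u ^ α) := aux_cont_rpow α hα0
  have cg : Continuous (fun u : ℝ => (1-u) ^ α) :=
    cf.comp (continuous_const.sub continuous_id)
  set φ1 : ℝ → ℝ := fun u => (u ^ α) ^ 2 with hφ1
  set φ2 : ℝ → ℝ := fun u => ((1-u) ^ α) ^ 2 with hφ2
  set φ3 : ℝ → ℝ := fun u => (A * u ^ α + B * (1-u) ^ α - B) ^ 2 with hφ3
  set φ4 : ℝ → ℝ := fun u => u ^ α * (1-u) ^ α with hφ4
  set φ5 : ℝ → ℝ := fun u => u ^ α * (A * u ^ α + B * (1-u) ^ α - B) with hφ5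
  set φ6 : ℝ → ℝ := fun u => (1-u) ^ α * (A * u ^ α + B * (1-u) ^ α - B) with hφ6
  have mφ1 : Measurable φ1 := (cf.pow 2).measurable
  have mφ2 : Measurable φ2 := (cg.pow 2).measurable
  have cc : Continuous (fun u : ℝ => A * u ^ α + B * (1-u) ^ α - B) :=
    ((continuous_const.mul cf).add (continuous_const.mul cg)).sub continuous_const
  have mφ3 : Measurable φ3 := (cc.pow 2).measurable
  have mφ4 : Measurable φ4 := (cf.mul cg).measurable
  have mφ5 : Measurable φ5 := (cf.mul cc).measurable
  have mφ6 : Measurable φ6 := (cg.mul cc).measurable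
  -- bounds
  have hbnd : ∀ u ∈ Ioo (0:ℝ) 1,
      0 ≤ u ^ α ∧ u ^ α ≤ 1 ∧ 0 ≤ (1-u) ^ α ∧ (1-u) ^ α ≤ 1 := by
    intro u hu
    exact ⟨Real.rpow_nonneg hu.1.le α, Real.rpow_le_one hu.1.le hu.2.le hα0.le,
      Real.rpow_nonneg (by linarith [hu.2]) α,
      Real.rpow_le_one (by linarith [hu.2]) (by linarith [hu.1]) hα0.le⟩
  have habs : ∀ u ∈ Ioo (0:ℝ) 1, |A * u ^ α + B * (1-u) ^ α - B| ≤ A + 2*B := by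
    intro u hu
    obtain ⟨h1, h2, h3, h4⟩ := hbnd u hu
    rw [abs_le]
    constructor <;> nlinarith
  have intφ1 : Integrable (fun ω => φ1 (U ω)) ℙ := by
    refine hUint φ1 1 mφ1 ?_
    intro u hu; obtain ⟨h1, h2, h3, h4⟩ := hbnd u hu
    rw [hφ1]; simp only
    rw [Real.norm_eq_abs, abs_of_nonneg (by positivity)]
    nlinarith
  have intφ2 : Integrable (fun ω => φ2 (U ω)) ℙ := by
    refine hUint φ2 1 mφ2 ?_
    intro u hu; obtain ⟨h1, h2, h3, h4⟩ := hbnd u hu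
    rw [hφ2]; simp only
    rw [Real.norm_eq_abs, abs_of_nonneg (by positivity)]
    nlinarith
  have intφ3 : Integrable (fun ω => φ3 (U ω)) ℙ := by
    refine hUint φ3 ((A + 2*B)^2) mφ3 ?_
    intro u hu
    have h := habs u hu
    rw [hφ3]; simp only
    rw [Real.norm_eq_abs, abs_of_nonneg (sq_nonneg _)]
    exact sq_le_sq' (by linarith [abs_nonneg (A * u ^ α + B * (1-u) ^ α - B), neg_abs_le (A * u ^ α + B * (1-u) ^ α - B)]) (le_trans (le_abs_self _) h)
  have intφ4 : Integrable (fun ω => φ4 (U ω)) ℙ := by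
    refine hUint φ4 1 mφ4 ?_
    intro u hu; obtain ⟨h1, h2, h3, h4⟩ := hbnd u hu
    rw [hφ4]; simp only
    rw [Real.norm_eq_abs, abs_of_nonneg (by positivity)]
    nlinarith
  have intφ5 : Integrable (fun ω => φ5 (U ω)) ℙ := by
    refine hUint φ5 (A + 2*B) mφ5 ?_
    intro u hu; obtain ⟨h1, h2, h3, h4⟩ := hbnd u hu
    have h := habs u hu
    rw [hφ5]; simp only
    rw [Real.norm_eq_abs, abs_mul, abs_of_nonneg h1]
    calc u ^ α * |A * u ^ α + B * (1-u) ^ α - B| ≤ 1 * (A + 2*B) := by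
          apply mul_le_mul h2 h (abs_nonneg _) zero_le_one
      _ = A + 2*B := one_mul _
  have intφ6 : Integrable (fun ω => φ6 (U ω)) ℙ := by
    refine hUint φ6 (A + 2*B) mφ6 ?_
    intro u hu; obtain ⟨h1, h2, h3, h4⟩ := hbnd u hu
    have h := habs u hu
    rw [hφ6]; simp only
    rw [Real.norm_eq_abs, abs_mul, abs_of_nonneg h3]
    calc (1-u) ^ α * |A * u ^ α + B * (1-u) ^ α - B| ≤ 1 * (A + 2*B) := by
          apply mul_le_mul h4 h (abs_nonneg _) zero_le_one
      _ = A + 2*B := one_mul _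
  -- composed independence
  have indφ1 : IndepFun (fun ω => φ1 (U ω)) (fun ω => D1 ω ^ 2) ℙ :=
    hindU1.comp mφ1 msq
  have indφ2 : IndepFun (fun ω => φ2 (U ω)) (fun ω => D2 ω ^ 2) ℙ :=
    hindU2.comp mφ2 msq
  have indφ4 : IndepFun (fun ω => φ4 (U ω)) (fun ω => D1 ω * D2 ω) ℙ :=
    hpair.comp mφ4 (measurable_fst.mul measurable_snd)
  have indφ5 : IndepFun (fun ω => φ5 (U ω)) D1 ℙ :=
    hindU1.comp mφ5 measurable_id
  have indφ6 : IndepFun (fun ω => φ6 (U ω)) D2 ℙ :=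
    hindU2.comp mφ6 measurable_id
  -- integrable products
  have intY4 : Integrable (fun ω => D1 ω * D2 ω) ℙ := hind12.integrable_mul hD1_int hD2_int
  have P1 : Integrable (fun ω => φ1 (U ω) * D1 ω ^ 2) ℙ := indφ1.integrable_mul intφ1 hD1sq_int
  have P2 : Integrable (fun ω => φ2 (U ω) * D2 ω ^ 2) ℙ := indφ2.integrable_mul intφ2 hD2sq_int
  have P4 : Integrable (fun ω => φ4 (U ω) * (D1 ω * D2 ω)) ℙ := indφ4.integrable_mul intφ4 intY4
  have P5 : Integrable (fun ω => φ5 (U ω) * D1 ω) ℙ := indφ5.integrable_mul intφ5 hD1_int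
  have P6 : Integrable (fun ω => φ6 (U ω) * D2 ω) ℙ := indφ6.integrable_mul intφ6 hD2_int
  -- equality of second moments via the fixed point
  have mf : Measurable (fun ω => U ω ^ α) := cf.measurable.comp hUmeas
  have mg : Measurable (fun ω => (1 - U ω) ^ α) := cg.measurable.comp hUmeas
  have hmeasR : Measurable (fun ω =>
      U ω ^ α * D1 ω + (1 - U ω) ^ α * D2 ω
        + A * U ω ^ α + B * (1 - U ω) ^ α - B) :=
    ((((mf.mul hD1meas).add (mg.mul hD2meas)).add
      (measurable_const.mul mf)).add (measurable_const.mul mg)).sub measurable_const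
  have hfix2 : ∫ ω, D ω ^ 2 ∂ℙ = ∫ ω, (U ω ^ α * D1 ω + (1 - U ω) ^ α * D2 ω
      + A * U ω ^ α + B * (1 - U ω) ^ α - B) ^ 2 ∂ℙ := by
    rw [← integral_map hDmeas.aemeasurable msq.aestronglyMeasurable, hfix,
      integral_map hmeasR.aemeasurable msq.aestronglyMeasurable]
  -- expand the square
  have hfun : (fun ω => (U ω ^ α * D1 ω + (1 - U ω) ^ α * D2 ω
        + A * U ω ^ α + B * (1 - U ω) ^ α - B) ^ 2)
      = fun ω => (φ1 (U ω) * D1 ω ^ 2 + φ2 (U ω) * D2 ω ^ 2 + φ3 (U ω))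
          + (2 * (φ4 (U ω) * (D1 ω * D2 ω)) + 2 * (φ5 (U ω) * D1 ω)
            + 2 * (φ6 (U ω) * D2 ω)) := by
    funext ω
    rw [hφ1, hφ2, hφ3, hφ4, hφ5, hφ6]
    simp only
    ring
  have P4' : Integrable (fun ω => 2 * (φ4 (U ω) * (D1 ω * D2 ω))) ℙ := P4.const_mul 2
  have P5' : Integrable (fun ω => 2 * (φ5 (U ω) * D1 ω)) ℙ := P5.const_mul 2
  have P6' : Integrable (fun ω => 2 * (φ6 (U ω) * D2 ω)) ℙ := P6.const_mul 2
  have I12 : Integrable (fun ω => φ1 (U ω) * D1 ω ^ 2 + φ2 (U ω) * D2 ω ^ 2) ℙ := P1.add P2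
  have I123 : Integrable (fun ω => φ1 (U ω) * D1 ω ^ 2 + φ2 (U ω) * D2 ω ^ 2 + φ3 (U ω)) ℙ :=
    I12.add intφ3
  have I45 : Integrable (fun ω => 2 * (φ4 (U ω) * (D1 ω * D2 ω)) + 2 * (φ5 (U ω) * D1 ω)) ℙ :=
    P4'.add P5'
  have s0 : ∫ ω, ((φ1 (U ω) * D1 ω ^ 2 + φ2 (U ω) * D2 ω ^ 2 + φ3 (U ω))
        + (2 * (φ4 (U ω) * (D1 ω * D2 ω)) + 2 * (φ5 (U ω) * D1 ω) + 2 * (φ6 (U ω) * D2 ω))) ∂ℙ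
      = (∫ ω, (φ1 (U ω) * D1 ω ^ 2 + φ2 (U ω) * D2 ω ^ 2 + φ3 (U ω)) ∂ℙ)
        + ∫ ω, (2 * (φ4 (U ω) * (D1 ω * D2 ω)) + 2 * (φ5 (U ω) * D1 ω) + 2 * (φ6 (U ω) * D2 ω)) ∂ℙ :=
    integral_add I123 (I45.add P6')
  have s1 : ∫ ω, (φ1 (U ω) * D1 ω ^ 2 + φ2 (U ω) * D2 ω ^ 2 + φ3 (U ω)) ∂ℙ
      = (∫ ω, (φ1 (U ω) * D1 ω ^ 2 + φ2 (U ω) * D2 ω ^ 2) ∂ℙ) + ∫ ω, φ3 (U ω) ∂ℙ :=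
    integral_add I12 intφ3
  have s2 : ∫ ω, (φ1 (U ω) * D1 ω ^ 2 + φ2 (U ω) * D2 ω ^ 2) ∂ℙ
      = (∫ ω, φ1 (U ω) * D1 ω ^ 2 ∂ℙ) + ∫ ω, φ2 (U ω) * D2 ω ^ 2 ∂ℙ :=
    integral_add P1 P2
  have s3 : ∫ ω, (2 * (φ4 (U ω) * (D1 ω * D2 ω)) + 2 * (φ5 (U ω) * D1 ω) + 2 * (φ6 (U ω) * D2 ω)) ∂ℙ
      = (∫ ω, (2 * (φ4 (U ω) * (D1 ω * D2 ω)) + 2 * (φ5 (U ω) * D1 ω)) ∂ℙ)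
        + ∫ ω, 2 * (φ6 (U ω) * D2 ω) ∂ℙ :=
    integral_add I45 P6'
  have s4 : ∫ ω, (2 * (φ4 (U ω) * (D1 ω * D2 ω)) + 2 * (φ5 (U ω) * D1 ω)) ∂ℙ
      = (∫ ω, 2 * (φ4 (U ω) * (D1 ω * D2 ω)) ∂ℙ) + ∫ ω, 2 * (φ5 (U ω) * D1 ω) ∂ℙ :=
    integral_add P4' P5'
  have s5 : ∫ ω, 2 * (φ4 (U ω) * (D1 ω * D2 ω)) ∂ℙ = 2 * ∫ ω, φ4 (U ω) * (D1 ω * D2 ω) ∂ℙ :=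
    integral_const_mul 2 _
  have s6 : ∫ ω, 2 * (φ5 (U ω) * D1 ω) ∂ℙ = 2 * ∫ ω, φ5 (U ω) * D1 ω ∂ℙ :=
    integral_const_mul 2 _
  have s7 : ∫ ω, 2 * (φ6 (U ω) * D2 ω) ∂ℙ = 2 * ∫ ω, φ6 (U ω) * D2 ω ∂ℙ :=
    integral_const_mul 2 _
  have hsum : ∫ ω, D ω ^ 2 ∂ℙ
      = (∫ ω, φ1 (U ω) * D1 ω ^ 2 ∂ℙ) + (∫ ω, φ2 (U ω) * D2 ω ^ 2 ∂ℙ)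
        + (∫ ω, φ3 (U ω) ∂ℙ)
        + (2 * ∫ ω, φ4 (U ω) * (D1 ω * D2 ω) ∂ℙ)
        + (2 * ∫ ω, φ5 (U ω) * D1 ω ∂ℙ)
        + (2 * ∫ ω, φ6 (U ω) * D2 ω ∂ℙ) := by
    rw [hfix2, hfun, s0, s1, s2, s3, s4, s5, s6, s7]
    ring
  -- evaluate each piece
  have hm1 : ∫ ω, φ1 (U ω) * D1 ω ^ 2 ∂ℙ = (1/(2*α+1)) * ∫ ω, D ω ^ 2 ∂ℙ := by
    have key : ∫ ω, φ1 (U ω) * D1 ω ^ 2 ∂ℙ = (∫ ω, φ1 (U ω) ∂ℙ) * ∫ ω, D1 ω ^ 2 ∂ℙ :=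
      indφ1.integral_fun_mul_eq_mul_integral intφ1.aestronglyMeasurable hD1sq_int.aestronglyMeasurable
    rw [key, hUval φ1 mφ1, hED1sq, hφ1]
    rw [aux_int_rpow_sq α hα0]
  have hm2 : ∫ ω, φ2 (U ω) * D2 ω ^ 2 ∂ℙ = (1/(2*α+1)) * ∫ ω, D ω ^ 2 ∂ℙ := by
    have key : ∫ ω, φ2 (U ω) * D2 ω ^ 2 ∂ℙ = (∫ ω, φ2 (U ω) ∂ℙ) * ∫ ω, D2 ω ^ 2 ∂ℙ :=
      indφ2.integral_fun_mul_eq_mul_integral intφ2.aestronglyMeasurable hD2sq_int.aestronglyMeasurable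
    rw [key, hUval φ2 mφ2, hED2sq, hφ2]
    rw [show (∫ u in (0:ℝ)..1, ((1-u)^α)^2) = ∫ u in (0:ℝ)..1, (u^α)^2
      from aux_refl (fun u => (u^α)^2)]
    rw [aux_int_rpow_sq α hα0]
  have hm3 : ∫ ω, φ3 (U ω) ∂ℙ
      = A^2 * (1/(2*α+1)) + B^2 * (1/(2*α+1)) + B^2 + 2*A*B*J
        - 2*A*B*(1/(α+1)) - 2*B^2*(1/(α+1)) := by
    rw [hUval φ3 mφ3, hφ3, aux_S α A B hα0, hJ]
  have hm4 : ∫ ω, φ4 (U ω) * (D1 ω * D2 ω) ∂ℙ = 0 := by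
    have key : ∫ ω, φ4 (U ω) * (D1 ω * D2 ω) ∂ℙ
        = (∫ ω, φ4 (U ω) ∂ℙ) * ∫ ω, D1 ω * D2 ω ∂ℙ :=
      indφ4.integral_fun_mul_eq_mul_integral intφ4.aestronglyMeasurable intY4.aestronglyMeasurable
    have h12 : ∫ ω, D1 ω * D2 ω ∂ℙ = (∫ ω, D1 ω ∂ℙ) * ∫ ω, D2 ω ∂ℙ :=
      hind12.integral_fun_mul_eq_mul_integral hD1_int.aestronglyMeasurable hD2_int.aestronglyMeasurable
    rw [key, h12, hED1, hED2]
    ring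
  have hm5 : ∫ ω, φ5 (U ω) * D1 ω ∂ℙ = 0 := by
    have key : ∫ ω, φ5 (U ω) * D1 ω ∂ℙ = (∫ ω, φ5 (U ω) ∂ℙ) * ∫ ω, D1 ω ∂ℙ :=
      indφ5.integral_fun_mul_eq_mul_integral intφ5.aestronglyMeasurable hD1_int.aestronglyMeasurable
    rw [key, hED1, mul_zero]
  have hm6 : ∫ ω, φ6 (U ω) * D2 ω ∂ℙ = 0 := by
    have key : ∫ ω, φ6 (U ω) * D2 ω ∂ℙ = (∫ ω, φ6 (U ω) ∂ℙ) * ∫ ω, D2 ω ∂ℙ :=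
      indφ6.integral_fun_mul_eq_mul_integral intφ6.aestronglyMeasurable hD2_int.aestronglyMeasurable
    rw [key, hED2, mul_zero]
  rw [hm1, hm2, hm3, hm4, hm5, hm6] at hsum
  -- variance = second moment
  have hvar : variance D ℙ = ∫ ω, D ω ^ 2 ∂ℙ := by
    rw [variance_eq_sub hL2]
    simp only [Pi.pow_apply]
    rw [hmean]
    ring
  rw [hvar]
  -- final algebra
  have hne1 : α - 1 ≠ 0 := (by linarith : (0:ℝ) < α - 1).ne'
  have hne2 : α + 1 ≠ 0 := by positivity
  have hne3 : 2*α + 1 ≠ 0 := by positivity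
  have hne4 : 2*α - 1 ≠ 0 := (by linarith : (0:ℝ) < 2*α - 1).ne'
  rw [hA, hB] at hsum
  clear_value J
  set m : ℝ := ∫ ω, D ω ^ 2 ∂ℙ with hm
  clear_value m
  set_option maxHeartbeats 2000000 in
  field_simp at hsum
  have hC : ((2*α+1)*(α-1)^8*(α+1)^2 : ℝ) ≠ 0 :=
    mul_ne_zero (mul_ne_zero hne3 (pow_ne_zero 8 hne1)) (pow_ne_zero 2 hne2)
  have hz : (m * ((α-1)^2*(2*α-1)) - α*(α-2+2*(2*α+1)*J)) * ((2*α+1)*(α-1)^8*(α+1)^2) = 0 := by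
    linear_combination ((2*α+1)*(α-1)^8*(α+1)) * hsum
  have hzz : m * ((α-1)^2*(2*α-1)) - α*(α-2+2*(2*α+1)*J) = 0 := by
    rcases mul_eq_zero.mp hz with h | h
    · exact h
    · exact absurd h hC
  rw [eq_div_iff (mul_ne_zero (pow_ne_zero 2 hne1) hne4)]
  linarith [hzz]
end
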